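/- arXiv:2111.13077 — 8 statements merged into one kernel-verified Lean document; each statement's English description precedes it below -/
import Mathlib

section
/- For every a ∈ A and every ε ∈ (0,1) one has the inclusion Γ_a(ε) ⊆ ∪_{d ≤ a} X'_d; that is, every x ∈ Γ_a(ε) belongs to X'_d for some index d with d ≤ a. -/
open Set

/-- Setting: `X` a finite-dimensional real inner product space, `(Xa a)_{a ∈ A}`
a finite family of subspaces closed under intersection and containing `X` itself.  Writing
`b ≤ a` iff `Xa a ⊆ Xa b`, `x_b` for the orthogonal projection of `x` onto `Xa b`,
`X_b(ε) = {x | ‖x_b‖ > (1-ε)‖x‖}`, `Γ_a(ε) = (X \ {0}) \ ⋃_{¬ b ≤ a} X_b(ε)` and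
`X'_d = X_d \ ⋃_{c ⪈ d} X_c`, every `x ∈ Γ_a(ε)` belongs to `X'_d` for some `d ≤ a`. -/
theorem stmt1 {X : Type*} [NormedAddCommGroup X] [InnerProductSpace ℝ X]
    [FiniteDimensional ℝ X] {A : Type*} [Finite A] (Xa : A → Submodule ℝ X)
    (hinter : ∀ a b : A, ∃ c : A, Xa a ⊓ Xa b = Xa c)
    (hmin : ∃ amin : A, Xa amin = ⊤)
    (a : A) (ε : ℝ) (hε : ε ∈ Set.Ioo (0:ℝ) 1) (x : X)
    (hx : x ∈ ({(0:X)}ᶜ : Set X) \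
      ⋃ b ∈ {b : A | ¬ Xa a ≤ Xa b},
        {y : X | ‖(Submodule.orthogonalProjectionOnto (Xa b) y : X)‖ > (1 - ε) * ‖y‖}) :
    ∃ d : A, Xa a ≤ Xa d ∧
      x ∈ (Xa d : Set X) \ ⋃ c ∈ {c : A | Xa c < Xa d}, (Xa c : Set X) := by
  obtain ⟨hx0, hxU⟩ := hx
  have hx0' : x ≠ 0 := hx0
  -- For every b with ¬ Xa a ≤ Xa b, x ∉ Xa b
  have hkey : ∀ b : A, ¬ Xa a ≤ Xa b → x ∉ Xa b := by
    intro b hb hxb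
    apply hxU
    refine Set.mem_biUnion hb ?_
    have : (Submodule.orthogonalProjectionOnto (Xa b) x : X) = x :=
      Submodule.starProjection_eq_self_iff.mpr hxb
    simp only [Set.mem_setOf_eq, this]
    have hn : (0:ℝ) < ‖x‖ := norm_pos_iff.mpr hx0'
    have h1 : (1 - ε) * ‖x‖ < 1 * ‖x‖ :=
      mul_lt_mul_of_pos_right (sub_lt_self 1 hε.1) hn
    rw [one_mul] at h1
    exact h1
  -- the set of candidates
  obtain ⟨amin, hamin⟩ := hmin
  set S : Set A := {d : A | Xa a ≤ Xa d ∧ x ∈ Xa d} with hS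
  have hSne : S.Nonempty := ⟨amin, by simp [hS, hamin]⟩
  have hSfin : S.Finite := Set.toFinite S
  obtain ⟨d, hdS, hdmin⟩ : ∃ d ∈ S, ∀ c ∈ S, Xa c ≤ Xa d → Xa d = Xa c := by
    obtain ⟨d, hdS, hd⟩ := hSfin.exists_minimalFor Xa S hSne
    exact ⟨d, hdS, fun c hc h => le_antisymm (hd hc h) h⟩
  refine ⟨d, hdS.1, hdS.2, ?_⟩
  intro hmem
  obtain ⟨s, ⟨c, rfl⟩, hmem⟩ := hmem
  obtain ⟨s', hc, hmem⟩ := hmem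
  simp only [Set.mem_range] at hc
  obtain ⟨hclt, rfl⟩ := hc
  have hxc : x ∈ Xa c := hmem
  by_cases hac : Xa a ≤ Xa c
  · have : Xa c = Xa d := (hdmin c ⟨hac, hxc⟩ hclt.le).symm
    exact absurd this hclt.ne
  · exact hkey c hac hxc
end

section
/- For every a ∈ A, every ε ∈ (0,1) and every δ₀ > 0, every point x ∈ Γ_a(ε) lies in Y_d(δ) for some index d with d ≤ a and some δ ∈ (0,δ₀]; that is, Γ_a(ε) ⊆ ∪_{d ≤ a} ∪_{δ ∈ (0,δ₀]} Y_d(δ). -/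
open Set

/-- With `X_b(ε) = {x | ‖x_b‖ > (1-ε)‖x‖}`,
`Γ_a(ε) = (X \ {0}) \ ⋃_{¬ b ≤ a} X_b(ε)` and
`Y_d(δ) = X_d(δ) \ ⋃_{c ⪈ d} closure (X_c(3 δ^{1/n}))` (where `n = dim X ≥ 1`),
for every `ε ∈ (0,1)` and `δ₀ > 0` one has
`Γ_a(ε) ⊆ ⋃_{d ≤ a} ⋃_{δ ∈ (0,δ₀]} Y_d(δ)`. -/
theorem stmt2 {X : Type*} [NormedAddCommGroup X] [InnerProductSpace ℝ X]
    [FiniteDimensional ℝ X] (hn : 1 ≤ Module.finrank ℝ X)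
    {A : Type*} [Finite A] (Xa : A → Submodule ℝ X)
    (hinter : ∀ a b : A, ∃ c : A, Xa a ⊓ Xa b = Xa c)
    (hmin : ∃ amin : A, Xa amin = ⊤)
    (Xset : A → ℝ → Set X)
    (hXset : ∀ b η, Xset b η = {y : X | ‖((Xa b).orthogonalProjection y : X)‖ > (1 - η) * ‖y‖})
    (a : A) (ε : ℝ) (hε : ε ∈ Set.Ioo (0:ℝ) 1) (δ₀ : ℝ) (hδ₀ : 0 < δ₀) :
    (({(0:X)}ᶜ : Set X) \ ⋃ b ∈ {b : A | ¬ Xa a ≤ Xa b}, Xset b ε)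
      ⊆ ⋃ d ∈ {d : A | Xa a ≤ Xa d}, ⋃ δ ∈ Set.Ioc (0:ℝ) δ₀,
          (Xset d δ \
            ⋃ c ∈ {c : A | Xa c < Xa d},
              closure (Xset c (3 * δ ^ ((1:ℝ) / (Module.finrank ℝ X : ℝ))))) := by
  classical
  have : Fintype A := Fintype.ofFinite A
  set n := Module.finrank ℝ X with hndef
  intro x hx
  obtain ⟨hx0, hxU⟩ := hx
  have hxne : x ≠ 0 := hx0
  have hxnorm : 0 < ‖x‖ := norm_pos_iff.mpr hxne
  -- projections bound for bad b
  have hbad : ∀ b, ¬ Xa a ≤ Xa b →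
      ‖((Xa b).orthogonalProjection x : X)‖ ≤ (1 - ε) * ‖x‖ := by
    intro b hb
    by_contra h
    exact hxU (mem_biUnion hb (by rw [hXset]; exact lt_of_not_ge h))
  -- projection norm ≤, with strictness off the subspace
  have hple : ∀ b, ‖((Xa b).orthogonalProjection x : X)‖ ≤ ‖x‖ := by
    intro b
    have h := Submodule.norm_sq_eq_add_norm_sq_projection x (Xa b)
    simp only [Submodule.coe_norm] at h
    nlinarith [norm_nonneg (((Xa b)ᗮ.orthogonalProjection x : X)), norm_nonneg x,
      norm_nonneg (((Xa b).orthogonalProjection x : X))]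
  have hplt : ∀ b, x ∉ Xa b → ‖((Xa b).orthogonalProjection x : X)‖ < ‖x‖ := by
    intro b hb
    rcases lt_or_eq_of_le (hple b) with h | h
    · exact h
    · exfalso
      have hpy := Submodule.norm_sq_eq_add_norm_sq_projection x (Xa b)
      simp only [Submodule.coe_norm] at hpy
      have h0 : ‖((Xa b)ᗮ.orthogonalProjection x : X)‖ = 0 := by
        refine le_antisymm ?_ (norm_nonneg _)
        nlinarith [norm_nonneg (((Xa b)ᗮ.orthogonalProjection x : X))]
      have h0' : ((Xa b)ᗮ.orthogonalProjection x : X) = 0 := by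
        simpa using norm_eq_zero.mp h0
      have := Submodule.starProjection_add_starProjection_orthogonal (K := Xa b) x
      simp only [Submodule.starProjection_apply] at this
      rw [h0', add_zero] at this
      exact hb (this ▸ (((Xa b).orthogonalProjection x).2))
  -- finite intersections exist
  have hinf : ∀ s : Finset A, ∃ d, Xa d = s.inf Xa := by
    intro s
    induction s using Finset.induction with
    | empty => simpa using hmin
    | @insert a' s' hni ih =>
        obtain ⟨d, hd⟩ := ih
        obtain ⟨c, hc⟩ := hinter a' d
        exact ⟨c, by rw [← hc, hd, Finset.inf_insert]⟩
  set S : Finset A := Finset.univ.filter (fun b => Xa a ≤ Xa b ∧ x ∈ Xa b) with hS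
  obtain ⟨d, hd⟩ := hinf S
  obtain ⟨amin, hamin⟩ := hmin
  have haminS : amin ∈ S := by
    simp [hS, hamin]
  have had : Xa a ≤ Xa d := by
    rw [hd]
    exact Finset.le_inf fun b hb => ((Finset.mem_filter.mp hb).2).1
  have hxd : x ∈ Xa d := by
    rw [hd, Submodule.mem_finsetInf]
    exact fun b hb => ((Finset.mem_filter.mp hb).2).2
  -- key strictness for all c below d
  have key : ∀ c, Xa c < Xa d → ‖((Xa c).orthogonalProjection x : X)‖ < ‖x‖ := by
    intro c hc
    by_cases h1 : Xa a ≤ Xa c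
    · have hxc : x ∉ Xa c := by
        intro hxc
        have : c ∈ S := by simp [hS, h1, hxc]
        exact absurd (hd ▸ Finset.inf_le this) (not_le_of_gt hc)
      exact hplt c hxc
    · calc ‖((Xa c).orthogonalProjection x : X)‖ ≤ (1 - ε) * ‖x‖ := hbad c h1
        _ < 1 * ‖x‖ := mul_lt_mul_of_pos_right (sub_lt_self 1 hε.1) hxnorm
        _ = ‖x‖ := one_mul _
  -- choose η₀
  set g : A → ℝ := fun c => if Xa c < Xa d then (‖x‖ - ‖((Xa c).orthogonalProjection x : X)‖) / ‖x‖ else 1 with hg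
  have huniv : (Finset.univ : Finset A).Nonempty := ⟨amin, Finset.mem_univ _⟩
  set η₀ : ℝ := Finset.univ.inf' huniv g with hη₀def
  have hη₀pos : 0 < η₀ := by
    rw [hη₀def, Finset.lt_inf'_iff]
    intro c _
    simp only [hg]
    by_cases h : Xa c < Xa d
    · rw [if_pos h]
      exact div_pos (by linarith [key c h]) hxnorm
    · rw [if_neg h]; norm_num
  have hη₀le : ∀ c, Xa c < Xa d → η₀ ≤ (‖x‖ - ‖((Xa c).orthogonalProjection x : X)‖) / ‖x‖ := by
    intro c hc
    have h := Finset.inf'_le g (Finset.mem_univ c)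
    simp only [hg] at h
    rwa [if_pos hc] at h
  -- choose δ
  set δ : ℝ := min δ₀ ((η₀/6)^n) with hδdef
  have hδpos : 0 < δ := lt_min hδ₀ (pow_pos (by linarith) n)
  have hδle : δ ≤ δ₀ := min_le_left _ _
  have hnne : (n:ℝ) ≠ 0 := by positivity
  -- bound on η = 3 δ^{1/n}
  have hrpow : δ ^ ((1:ℝ)/n) ≤ η₀/6 := by
    have h1 : δ ^ ((1:ℝ)/n) ≤ ((η₀/6)^n) ^ ((1:ℝ)/n) :=
      Real.rpow_le_rpow hδpos.le (min_le_right _ _) (by positivity)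
    have h2 : ((η₀/6)^n : ℝ) ^ ((1:ℝ)/n) = η₀/6 := by
      rw [← Real.rpow_natCast (η₀/6) n, ← Real.rpow_mul (by linarith)]
      rw [mul_one_div, div_self hnne, Real.rpow_one]
    linarith [h1, h2.le, h2.ge]
  set η : ℝ := 3 * δ ^ ((1:ℝ)/(n:ℝ)) with hηdef
  have hηlt : η < η₀ := by
    rw [hηdef]; nlinarith
  refine mem_iUnion₂.mpr ⟨d, had, mem_iUnion₂.mpr ⟨δ, ⟨hδpos, hδle⟩, ?_, ?_⟩⟩
  · rw [hXset]
    have : ((Xa d).orthogonalProjection x : X) = x :=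
      Submodule.starProjection_eq_self_iff.mpr hxd
    rw [Set.mem_setOf_eq, this]
    nlinarith
  · intro hmem
    rw [mem_iUnion₂] at hmem
    obtain ⟨c, hc, hxcl⟩ := hmem
    have hcl : closure (Xset c η) ⊆ {y : X | (1-η) * ‖y‖ ≤ ‖((Xa c).orthogonalProjection y : X)‖} := by
      apply closure_minimal
      · rw [hXset]; intro y hy
        simp only [Set.mem_setOf_eq] at hy ⊢
        exact hy.le
      · apply isClosed_le
        · exact (continuous_const.mul continuous_norm)
        · exact (continuous_subtype_val.comp ((Xa c).orthogonalProjection).continuous).norm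
    have h1 : (1-η) * ‖x‖ ≤ ‖((Xa c).orthogonalProjection x : X)‖ := hcl hxcl
    have h2 : η₀ ≤ (‖x‖ - ‖((Xa c).orthogonalProjection x : X)‖) / ‖x‖ := hη₀le c hc
    have h3 : η₀ * ‖x‖ ≤ ‖x‖ - ‖((Xa c).orthogonalProjection x : X)‖ :=
      (le_div_iff₀ hxnorm).mp h2
    nlinarith
end

section
/- For every a ∈ A, every ε ∈ (0,1) and every δ₀ > 0, there exist J ∈ ℕ, indices d_1,…,d_J ∈ A with d_j ≤ a, and numbers δ_1,…,δ_J ∈ (0,δ₀], such that Γ_a(ε) ⊆ ∪_{j≤J} Y_{d_j}(δ_j). -/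
open Set

lemma closure_proj_bound {X : Type*} [NormedAddCommGroup X] [InnerProductSpace ℝ X]
    [FiniteDimensional ℝ X] (K : Submodule ℝ X) (η : ℝ) {y : X}
    (hy : y ∈ closure {z : X | ‖(Submodule.orthogonalProjectionOnto K z : X)‖ > (1 - η) * ‖z‖}) :
    (1 - η) * ‖y‖ ≤ ‖(Submodule.orthogonalProjectionOnto K y : X)‖ := by
  have hcl : IsClosed {z : X | (1 - η) * ‖z‖ ≤ ‖(Submodule.orthogonalProjectionOnto K z : X)‖} :=
    isClosed_le (continuous_const.mul continuous_norm)
      ((continuous_subtype_val.comp (Submodule.orthogonalProjectionOnto K).continuous).norm)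
  have hsub : {z : X | ‖(Submodule.orthogonalProjectionOnto K z : X)‖ > (1 - η) * ‖z‖} ⊆
      {z : X | (1 - η) * ‖z‖ ≤ ‖(Submodule.orthogonalProjectionOnto K z : X)‖} := fun z hz => by simp only [Set.mem_setOf_eq] at hz ⊢; exact le_of_lt hz
  exact closure_minimal hsub hcl hy

/-- In the setting of Statement 2, the covering of `Γ_a(ε)` can be taken
finite: there are `J ∈ ℕ`, indices `d_1, …, d_J ≤ a` and numbers `δ_1, …, δ_J ∈ (0,δ₀]`
with `Γ_a(ε) ⊆ ⋃_{j ≤ J} Y_{d_j}(δ_j)`. -/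
theorem stmt3 {X : Type*} [NormedAddCommGroup X] [InnerProductSpace ℝ X]
    [FiniteDimensional ℝ X] (hn : 1 ≤ Module.finrank ℝ X)
    {A : Type*} [Finite A] (Xa : A → Submodule ℝ X)
    (hinter : ∀ a b : A, ∃ c : A, Xa a ⊓ Xa b = Xa c)
    (hmin : ∃ amin : A, Xa amin = ⊤)
    (Xset : A → ℝ → Set X)
    (hXset : ∀ b η, Xset b η = {y : X | ‖(Submodule.orthogonalProjectionOnto (Xa b) y : X)‖ > (1 - η) * ‖y‖})
    (Yset : A → ℝ → Set X)
    (hYset : ∀ d δ, Yset d δ = Xset d δ \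
      ⋃ c ∈ {c : A | Xa c < Xa d},
        closure (Xset c (3 * δ ^ ((1:ℝ) / (Module.finrank ℝ X : ℝ)))))
    (a : A) (ε : ℝ) (hε : ε ∈ Set.Ioo (0:ℝ) 1) (δ₀ : ℝ) (hδ₀ : 0 < δ₀) :
    ∃ (J : ℕ) (d : Fin J → A) (δ : Fin J → ℝ),
      (∀ j, Xa a ≤ Xa (d j)) ∧ (∀ j, δ j ∈ Set.Ioc (0:ℝ) δ₀) ∧
      (({(0:X)}ᶜ : Set X) \ ⋃ b ∈ {b : A | ¬ Xa a ≤ Xa b}, Xset b ε)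
        ⊆ ⋃ j : Fin J, Yset (d j) (δ j) := by
  classical
  cases nonempty_fintype A
  obtain ⟨amin, hamin⟩ := hmin
  obtain ⟨hε0, hε1⟩ := hε
  set n := Module.finrank ℝ X with hnX
  have hn0 : 0 < n := hn
  have hnR : (0:ℝ) < (n:ℝ) := by exact_mod_cast hn0
  have h4 : (0:ℝ) < 4 ^ n := by positivity
  set ρ : ℝ := min 1 (min (δ₀ / 4 ^ n) ((ε / 3) ^ n / (2 * 4 ^ n))) with hρdef
  have hρ0 : 0 < ρ := lt_min one_pos (lt_min (by positivity) (by positivity))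
  have hρ1 : ρ ≤ 1 := min_le_left _ _
  set t : ℕ → ℝ := fun k => 4 ^ k * ρ ^ (n ^ (n - k)) with htdef
  have ht0 : ∀ k, 0 < t k := fun k => mul_pos (by positivity) (pow_pos hρ0 _)
  have htle : ∀ k, k ≤ n → t k ≤ 4 ^ n * ρ := by
    intro k hk
    have h1 : (4:ℝ) ^ k ≤ 4 ^ n := pow_le_pow_right₀ (by norm_num) hk
    have h2 : ρ ^ (n ^ (n - k)) ≤ ρ :=
      pow_le_of_le_one hρ0.le hρ1 (pow_ne_zero _ (by omega))
    exact mul_le_mul h1 h2 (pow_pos hρ0 _).le (by positivity)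
  have htδ₀ : ∀ k, k ≤ n → t k ≤ δ₀ := by
    intro k hk
    have h2 : ρ ≤ δ₀ / 4 ^ n := le_trans (min_le_right _ _) (min_le_left _ _)
    have := htle k hk
    calc t k ≤ 4 ^ n * ρ := this
      _ ≤ 4 ^ n * (δ₀ / 4 ^ n) := by nlinarith
      _ = δ₀ := by field_simp
  have htε : ∀ k, k ≤ n → t k < (ε / 3) ^ n := by
    intro k hk
    have h2 : ρ ≤ (ε / 3) ^ n / (2 * 4 ^ n) := le_trans (min_le_right _ _) (min_le_right _ _)
    have h3 : (0:ℝ) < (ε / 3) ^ n := by positivity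
    have := htle k hk
    have h4' : 4 ^ n * ρ ≤ (ε / 3) ^ n / 2 := by
      calc (4:ℝ) ^ n * ρ ≤ 4 ^ n * ((ε / 3) ^ n / (2 * 4 ^ n)) := by nlinarith
        _ = (ε / 3) ^ n / 2 := by field_simp
    linarith
  have hpow_eq : ∀ s : ℝ, 0 ≤ s → (s ^ n) ^ ((1:ℝ) / n) = s := by
    intro s hs
    rw [← Real.rpow_natCast s n, ← Real.rpow_mul hs, mul_one_div, div_self hnR.ne', Real.rpow_one]
  have htkey : ∀ k, k ≤ n → 3 * (t k) ^ ((1:ℝ) / n) < ε := by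
    intro k hk
    have h1 : (t k) ^ ((1:ℝ) / n) < ((ε / 3) ^ n) ^ ((1:ℝ) / n) :=
      Real.rpow_lt_rpow (ht0 k).le (htε k hk) (by positivity)
    rw [hpow_eq (ε / 3) (by positivity)] at h1
    linarith
  have htstep : ∀ k, k + 1 ≤ n → 3 * (t k) ^ ((1:ℝ) / n) < t (k + 1) := by
    intro k hk
    have hnk : n ^ (n - k) = n ^ (n - k - 1) * n := by
      rw [← pow_succ]
      congr 1
      omega
    have e1 : (t k) ^ ((1:ℝ) / n) = (4:ℝ) ^ ((k:ℝ) / n) * ρ ^ (n ^ (n - k - 1)) := by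
      show ((4:ℝ) ^ k * ρ ^ (n ^ (n - k))) ^ ((1:ℝ) / n) = _
      rw [Real.mul_rpow (by positivity) (pow_pos hρ0 _).le]
      congr 1
      · rw [← Real.rpow_natCast (4:ℝ) k, ← Real.rpow_mul (by norm_num), mul_one_div]
      · rw [← Real.rpow_natCast ρ (n ^ (n - k)), ← Real.rpow_mul hρ0.le,
          ← Real.rpow_natCast ρ (n ^ (n - k - 1))]
        congr 1
        rw [hnk]
        push_cast
        field_simp
    have h4k : (4:ℝ) ^ ((k:ℝ) / n) ≤ 4 ^ k := by
      rw [← Real.rpow_natCast (4:ℝ) k]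
      apply Real.rpow_le_rpow_of_exponent_le (by norm_num)
      rw [div_le_iff₀ hnR]
      have h1n : (1:ℝ) ≤ (n:ℝ) := by exact_mod_cast hn0
      nlinarith [Nat.cast_nonneg (α := ℝ) k]
    have hp : (0:ℝ) < ρ ^ (n ^ (n - k - 1)) := pow_pos hρ0 _
    have e2 : t (k + 1) = 4 * 4 ^ k * ρ ^ (n ^ (n - k - 1)) := by
      show (4:ℝ) ^ (k + 1) * ρ ^ (n ^ (n - (k + 1))) = _
      rw [pow_succ]
      have : n - (k + 1) = n - k - 1 := by omega
      rw [this]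
      ring
    rw [e1, e2]
    nlinarith [mul_le_mul_of_nonneg_right h4k hp.le,
      mul_pos (pow_pos (by norm_num : (0:ℝ) < 4) k) hp]
  -- the index set
  set J := Fintype.card (A × Fin (n + 1)) with hJ
  set e : Fin J ≃ A × Fin (n + 1) := (Fintype.equivFin (A × Fin (n + 1))).symm with he
  refine ⟨J, fun j => if Xa a ≤ Xa (e j).1 then (e j).1 else a,
    fun j => t ((e j).2 : ℕ), ?_, ?_, ?_⟩
  · intro j
    dsimp only
    split
    · assumption
    · exact le_rfl
  · intro j
    exact ⟨ht0 _, htδ₀ _ (Nat.lt_succ_iff.mp (e j).2.2)⟩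
  · intro x hx
    have hx0 : x ≠ 0 := hx.1
    have hxnorm : (0:ℝ) < ‖x‖ := norm_pos_iff.mpr hx0
    have hxΓ : ∀ b, ¬ Xa a ≤ Xa b → x ∉ Xset b ε := fun b hb hmem =>
      hx.2 (mem_biUnion hb hmem)
    have key : ∀ m : ℕ, ∀ d' : A, ∀ k : ℕ, Module.finrank ℝ (Xa d') ≤ m →
        k + Module.finrank ℝ (Xa d') ≤ n → Xa a ≤ Xa d' →
        x ∈ Xset d' (t k) →
        x ∈ ⋃ j : Fin J, Yset ((fun j => if Xa a ≤ Xa (e j).1 then (e j).1 else a) j)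
          ((fun j => t ((e j).2 : ℕ)) j) := by
      intro m
      induction m with
      | zero =>
        intro d' k hm hkn had hxd
        by_cases hY : x ∈ Yset d' (t k)
        · have hk : k < n + 1 := by omega
          refine mem_iUnion.mpr ⟨e.symm (d', ⟨k, hk⟩), ?_⟩
          have heq : e (e.symm (d', ⟨k, hk⟩)) = (d', ⟨k, hk⟩) := e.apply_symm_apply _
          simpa [heq, had] using hY
        · exfalso
          rw [hYset] at hY
          have hxB : x ∈ ⋃ c ∈ {c : A | Xa c < Xa d'},
              closure (Xset c (3 * (t k) ^ ((1:ℝ) / (n:ℝ)))) := by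
            by_contra h
            exact hY ⟨hxd, h⟩
          obtain ⟨c, hc, -⟩ := mem_iUnion₂.mp hxB
          have := Submodule.finrank_lt_finrank_of_lt hc
          omega
      | succ m ih =>
        intro d' k hm hkn had hxd
        by_cases hY : x ∈ Yset d' (t k)
        · have hk : k < n + 1 := by omega
          refine mem_iUnion.mpr ⟨e.symm (d', ⟨k, hk⟩), ?_⟩
          have heq : e (e.symm (d', ⟨k, hk⟩)) = (d', ⟨k, hk⟩) := e.apply_symm_apply _
          simpa [heq, had] using hY
        · rw [hYset] at hY
          have hxB : x ∈ ⋃ c ∈ {c : A | Xa c < Xa d'},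
              closure (Xset c (3 * (t k) ^ ((1:ℝ) / (n:ℝ)))) := by
            by_contra h
            exact hY ⟨hxd, h⟩
          obtain ⟨c, hc, hxc⟩ := mem_iUnion₂.mp hxB
          rw [hXset] at hxc
          have hb := closure_proj_bound (Xa c) (3 * (t k) ^ ((1:ℝ) / (n:ℝ))) hxc
          have hfr : Module.finrank ℝ (Xa c) < Module.finrank ℝ (Xa d') :=
            Submodule.finrank_lt_finrank_of_lt hc
          have hkn' : k ≤ n := by omega
          have hεk := htkey k hkn'
          have hxcε : x ∈ Xset c ε := by
            rw [hXset]
            have : (1 - ε) * ‖x‖ < (1 - 3 * (t k) ^ ((1:ℝ) / (n:ℝ))) * ‖x‖ := by nlinarith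
            exact lt_of_lt_of_le this hb
          have hac : Xa a ≤ Xa c := by
            by_contra hnot
            exact hxΓ c hnot hxcε
          have hk1 : k + 1 ≤ n := by omega
          have hstep := htstep k hk1
          have hxc' : x ∈ Xset c (t (k + 1)) := by
            rw [hXset]
            have : (1 - t (k + 1)) * ‖x‖ < (1 - 3 * (t k) ^ ((1:ℝ) / (n:ℝ))) * ‖x‖ := by nlinarith
            exact lt_of_lt_of_le this hb
          exact ih c (k + 1) (by omega) (by omega) hac hxc'
    have hfr_amin : Module.finrank ℝ (Xa amin) = n := by
      rw [hamin]
      exact finrank_top ℝ X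
    have hx_start : x ∈ Xset amin (t 0) := by
      rw [hXset]
      have hproj : ((Submodule.orthogonalProjectionOnto (Xa amin) x : X)) = x :=
        Submodule.starProjection_eq_self_iff.mpr (by rw [hamin]; trivial)
      show (1 - t 0) * ‖x‖ < ‖(Submodule.orthogonalProjectionOnto (Xa amin) x : X)‖
      rw [hproj]
      nlinarith [ht0 0]
    exact key n amin 0 (le_of_eq hfr_amin) (by omega) (hamin ▸ le_top) hx_start
end

section
/- Let E be a finite-dimensional real inner product space, μ > 0, C ≥ 0, and let V : E → ℝ be differentiable with |V(w)| ≤ C⟨w⟩^{-μ} and ‖∇V(w)‖ ≤ C⟨w⟩^{-1-μ} for all w ∈ E. Then for every κ ∈ [0,1] there exists a constant C' ≥ 0 (depending only on C, μ, κ) such that for all u, v ∈ E: |V(u+v) − V(u)| ≤ C' · ⟨v⟩^{(μ+2)κ + μ(1−κ)} · ⟨u⟩^{-(1+μ)κ − μ(1−κ)}. In particular (κ = 1): |V(u+v) − V(u)| ≤ C' ⟨v⟩^{μ+2} ⟨u⟩^{-1-μ}, and (κ = 0): |V(u+v) − V(u)| ≤ C' ⟨v⟩^{μ} ⟨u⟩^{-μ}.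 -/
private lemma J_one_le {E : Type*} [NormedAddCommGroup E] (w : E) :
    1 ≤ Real.sqrt (1 + ‖w‖ ^ 2) := by
  have h := Real.sq_sqrt (show (0:ℝ) ≤ 1 + ‖w‖ ^ 2 by positivity)
  nlinarith [Real.sqrt_nonneg (1 + ‖w‖ ^ 2), sq_nonneg ‖w‖]

private lemma J_pos {E : Type*} [NormedAddCommGroup E] (w : E) :
    0 < Real.sqrt (1 + ‖w‖ ^ 2) := lt_of_lt_of_le one_pos (J_one_le w)

private lemma norm_le_J {E : Type*} [NormedAddCommGroup E] (w : E) :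
    ‖w‖ ≤ Real.sqrt (1 + ‖w‖ ^ 2) := by
  have h := Real.sq_sqrt (show (0:ℝ) ≤ 1 + ‖w‖ ^ 2 by positivity)
  nlinarith [Real.sqrt_nonneg (1 + ‖w‖ ^ 2), norm_nonneg w]

private lemma peetre {E : Type*} [NormedAddCommGroup E] (u v : E) :
    Real.sqrt (1 + ‖u‖ ^ 2)
      ≤ Real.sqrt 2 * Real.sqrt (1 + ‖u + v‖ ^ 2) * Real.sqrt (1 + ‖v‖ ^ 2) := by
  rw [← Real.sqrt_mul (by norm_num), ← Real.sqrt_mul (by positivity)]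
  apply Real.sqrt_le_sqrt
  have h0 : u = (u + v) + (-v) := by abel
  have h1 : ‖u‖ ≤ ‖u + v‖ + ‖v‖ := by
    calc ‖u‖ = ‖(u + v) + (-v)‖ := by rw [← h0]
    _ ≤ ‖u + v‖ + ‖-v‖ := norm_add_le _ _
    _ = ‖u + v‖ + ‖v‖ := by rw [norm_neg]
  nlinarith [norm_nonneg u, norm_nonneg (u+v), norm_nonneg v, sq_nonneg (‖u+v‖ - ‖v‖)]

private lemma pow_peetre {E : Type*} [NormedAddCommGroup E] (u v : E) {s : ℝ} (hs : 0 ≤ s) :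
    (Real.sqrt (1 + ‖u + v‖ ^ 2)) ^ (-s)
      ≤ (2:ℝ) ^ (s/2) * (Real.sqrt (1 + ‖v‖ ^ 2)) ^ s
          * (Real.sqrt (1 + ‖u‖ ^ 2)) ^ (-s) := by
  have h1 := J_pos (u + v); have h2 := J_pos u; have h3 := J_pos v
  have hinv : (Real.sqrt (1 + ‖u + v‖ ^ 2))⁻¹
      ≤ Real.sqrt 2 * Real.sqrt (1 + ‖v‖ ^ 2) * (Real.sqrt (1 + ‖u‖ ^ 2))⁻¹ := by
    rw [← one_div, ← one_div, mul_one_div, div_le_div_iff₀ h1 h2, one_mul]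
    calc Real.sqrt (1 + ‖u‖ ^ 2)
        ≤ Real.sqrt 2 * Real.sqrt (1 + ‖u + v‖ ^ 2) * Real.sqrt (1 + ‖v‖ ^ 2) := peetre u v
      _ = Real.sqrt 2 * Real.sqrt (1 + ‖v‖ ^ 2) * Real.sqrt (1 + ‖u + v‖ ^ 2) := by ring
  have key := Real.rpow_le_rpow (by positivity) hinv hs
  rw [Real.mul_rpow (by positivity) (by positivity),
      Real.mul_rpow (by positivity) (by positivity)] at key
  have hs2 : Real.sqrt 2 ^ s = (2:ℝ) ^ (s/2) := by
    rw [Real.sqrt_eq_rpow, ← Real.rpow_mul (by norm_num : (0:ℝ) ≤ 2),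
        show (1/2) * s = s/2 by ring]
  rw [Real.rpow_neg h1.le, Real.rpow_neg h2.le, ← Real.inv_rpow h1.le, ← Real.inv_rpow h2.le,
      ← hs2]
  exact key

/-- Let `E` be a finite-dimensional real inner product space, `μ > 0`,
`C ≥ 0`, and `V : E → ℝ` differentiable with `|V(w)| ≤ C⟨w⟩^{-μ}` and
`‖∇V(w)‖ ≤ C⟨w⟩^{-1-μ}` (Japanese bracket `⟨w⟩ = (1+‖w‖²)^{1/2}`).  Then for every
`κ ∈ [0,1]` there is `C' ≥ 0` with
`|V(u+v) − V(u)| ≤ C' ⟨v⟩^{(μ+2)κ + μ(1-κ)} ⟨u⟩^{-(1+μ)κ - μ(1-κ)}` for all `u, v ∈ E`. -/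
theorem stmt6 {E : Type*} [NormedAddCommGroup E] [InnerProductSpace ℝ E]
    [FiniteDimensional ℝ E] (μ C : ℝ) (hμ : 0 < μ) (hC : 0 ≤ C)
    (V : E → ℝ) (hV : Differentiable ℝ V)
    (hVb : ∀ w : E, |V w| ≤ C * (Real.sqrt (1 + ‖w‖ ^ 2)) ^ (-μ))
    (hVg : ∀ w : E, ‖gradient V w‖ ≤ C * (Real.sqrt (1 + ‖w‖ ^ 2)) ^ (-1 - μ)) :
    ∀ κ ∈ Set.Icc (0:ℝ) 1, ∃ C' : ℝ, 0 ≤ C' ∧ ∀ u v : E,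
      |V (u + v) - V u|
        ≤ C' * (Real.sqrt (1 + ‖v‖ ^ 2)) ^ ((μ + 2) * κ + μ * (1 - κ))
          * (Real.sqrt (1 + ‖u‖ ^ 2)) ^ (-(1 + μ) * κ - μ * (1 - κ)) := by
  rintro κ ⟨hκ0, hκ1⟩
  set J : E → ℝ := fun w => Real.sqrt (1 + ‖w‖ ^ 2) with hJdef
  have hfg : ∀ w : E, ‖fderiv ℝ V w‖ ≤ C * (J w) ^ (-(1 + μ)) := by
    intro w
    have : ‖fderiv ℝ V w‖ = ‖gradient V w‖ := by
      rw [gradient, LinearIsometryEquiv.norm_map]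
    rw [this, show -(1 + μ) = -1 - μ by ring]
    exact hVg w
  -- endpoint κ = 0
  obtain ⟨C0, hC0nn, hB0⟩ : ∃ c : ℝ, 0 ≤ c ∧ ∀ u v : E,
      |V (u + v) - V u| ≤ c * (J v) ^ μ * (J u) ^ (-μ) := by
    refine ⟨C * ((2:ℝ) ^ (μ/2) + 1), by positivity, fun u v => ?_⟩
    have h1 : |V (u + v) - V u| ≤ |V (u + v)| + |V u| := abs_sub _ _
    have h2 : |V (u + v)| ≤ C * ((2:ℝ) ^ (μ/2) * (J v) ^ μ * (J u) ^ (-μ)) := by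
      calc |V (u + v)| ≤ C * (J (u + v)) ^ (-μ) := hVb (u + v)
        _ ≤ C * ((2:ℝ) ^ (μ/2) * (J v) ^ μ * (J u) ^ (-μ)) :=
            mul_le_mul_of_nonneg_left (pow_peetre u v hμ.le) hC
    have h3 : |V u| ≤ C * ((J v) ^ μ * (J u) ^ (-μ)) := by
      calc |V u| ≤ C * (J u) ^ (-μ) := hVb u
        _ = C * (1 * (J u) ^ (-μ)) := by ring
        _ ≤ C * ((J v) ^ μ * (J u) ^ (-μ)) := by
            apply mul_le_mul_of_nonneg_left _ hC
            apply mul_le_mul_of_nonneg_right _ (by positivity)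
            exact Real.one_le_rpow (J_one_le v) hμ.le
    calc |V (u + v) - V u| ≤ |V (u + v)| + |V u| := h1
      _ ≤ C * ((2:ℝ) ^ (μ/2) * (J v) ^ μ * (J u) ^ (-μ))
            + C * ((J v) ^ μ * (J u) ^ (-μ)) := add_le_add h2 h3
      _ = C * ((2:ℝ) ^ (μ/2) + 1) * (J v) ^ μ * (J u) ^ (-μ) := by ring
  -- endpoint κ = 1
  obtain ⟨C1, hC1nn, hB1⟩ : ∃ c : ℝ, 0 ≤ c ∧ ∀ u v : E,
      |V (u + v) - V u| ≤ c * (J v) ^ (μ + 2) * (J u) ^ (-(1 + μ)) := by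
    refine ⟨C * (2:ℝ) ^ ((1+μ)/2), by positivity, fun u v => ?_⟩
    have hseg : Convex ℝ (segment ℝ u (u + v)) := convex_segment _ _
    set K : ℝ := C * (2:ℝ) ^ ((1+μ)/2) * (J v) ^ (1 + μ) * (J u) ^ (-(1 + μ)) with hK
    have hbound : ∀ x ∈ segment ℝ u (u + v), ‖fderiv ℝ V x‖ ≤ K := by
      rintro x ⟨a, b, ha, hb, hab, rfl⟩
      have hx : a • u + b • (u + v) = u + b • v := by
        rw [smul_add, show a • u + (b • u + b • v) = (a + b) • u + b • v by
          rw [add_smul]; abel, hab, one_smul]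
      rw [hx]
      have hJb : J (b • v) ≤ J v := by
        apply Real.sqrt_le_sqrt
        have : ‖b • v‖ ≤ ‖v‖ := by
          rw [norm_smul, Real.norm_eq_abs, abs_of_nonneg hb]
          nlinarith [norm_nonneg v]
        nlinarith [norm_nonneg (b • v)]
      calc ‖fderiv ℝ V (u + b • v)‖ ≤ C * (J (u + b • v)) ^ (-(1 + μ)) := hfg _
        _ ≤ C * ((2:ℝ) ^ ((1+μ)/2) * (J (b • v)) ^ (1 + μ) * (J u) ^ (-(1 + μ))) :=
            mul_le_mul_of_nonneg_left (pow_peetre u (b • v) (by positivity)) hC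
        _ ≤ C * ((2:ℝ) ^ ((1+μ)/2) * (J v) ^ (1 + μ) * (J u) ^ (-(1 + μ))) := by
            apply mul_le_mul_of_nonneg_left _ hC
            apply mul_le_mul_of_nonneg_right _ (by positivity)
            apply mul_le_mul_of_nonneg_left _ (by positivity)
            exact Real.rpow_le_rpow (J_pos _).le hJb (by positivity)
        _ = K := by rw [hK]; ring
    have hmvt := hseg.norm_image_sub_le_of_norm_fderiv_le
      (fun x _ => hV.differentiableAt) hbound
      (left_mem_segment ℝ u (u + v)) (right_mem_segment ℝ u (u + v))
    rw [Real.norm_eq_abs, add_sub_cancel_left] at hmvt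
    have hKnn : 0 ≤ K := by rw [hK]; positivity
    calc |V (u + v) - V u| ≤ K * ‖v‖ := hmvt
      _ ≤ K * J v := mul_le_mul_of_nonneg_left (norm_le_J v) hKnn
      _ = C * (2:ℝ) ^ ((1+μ)/2) * ((J v) ^ (1 + μ) * J v) * (J u) ^ (-(1 + μ)) := by
          rw [hK]; ring
      _ = C * (2:ℝ) ^ ((1+μ)/2) * (J v) ^ (μ + 2) * (J u) ^ (-(1 + μ)) := by
          rw [show (J v) ^ (1 + μ) * J v = (J v) ^ (μ + 2) by
            nth_rewrite 2 [show J v = (J v) ^ (1:ℝ) by rw [Real.rpow_one]]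
            rw [← Real.rpow_add (J_pos v), show (1 + μ) + 1 = μ + 2 by ring]]
  -- interpolation
  clear hVb hVg hfg hV
  refine ⟨C0 ^ (1 - κ) * C1 ^ κ, by positivity, fun u v => ?_⟩
  have hκ1' : 0 ≤ 1 - κ := by linarith
  have hJu := J_pos u; have hJv := J_pos v
  have hD : 0 ≤ |V (u + v) - V u| := abs_nonneg _
  have hstep : |V (u + v) - V u|
      ≤ (C0 * (J v) ^ μ * (J u) ^ (-μ)) ^ (1 - κ)
        * (C1 * (J v) ^ (μ + 2) * (J u) ^ (-(1 + μ))) ^ κ := by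
    calc |V (u + v) - V u| = |V (u + v) - V u| ^ ((1 - κ) + κ) := by
          rw [show (1 - κ) + κ = 1 by ring, Real.rpow_one]
      _ = |V (u + v) - V u| ^ (1 - κ) * |V (u + v) - V u| ^ κ := by
          rcases eq_or_lt_of_le hD with h | h
          · rcases eq_or_lt_of_le hκ0 with h0 | h0
            · rw [← h, ← h0]; norm_num
            · rw [← h, Real.zero_rpow (ne_of_gt h0), mul_zero,
                show (1 - κ) + κ = 1 by ring, Real.rpow_one]
          · rw [← Real.rpow_add h]
      _ ≤ (C0 * (J v) ^ μ * (J u) ^ (-μ)) ^ (1 - κ)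
            * (C1 * (J v) ^ (μ + 2) * (J u) ^ (-(1 + μ))) ^ κ :=
          mul_le_mul (Real.rpow_le_rpow hD (hB0 u v) hκ1')
            (Real.rpow_le_rpow hD (hB1 u v) hκ0)
            (Real.rpow_nonneg hD κ) (Real.rpow_nonneg (by positivity) _)
  refine hstep.trans_eq ?_
  rw [Real.mul_rpow (mul_nonneg hC0nn (by positivity)) (by positivity),
      Real.mul_rpow hC0nn (by positivity),
      Real.mul_rpow (mul_nonneg hC1nn (by positivity)) (by positivity),
      Real.mul_rpow hC1nn (by positivity),
      ← Real.rpow_mul hJv.le, ← Real.rpow_mul hJu.le,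
      ← Real.rpow_mul hJv.le, ← Real.rpow_mul hJu.le,
      show (μ + 2) * κ + μ * (1 - κ) = μ * (1 - κ) + (μ + 2) * κ by ring,
      show -(1 + μ) * κ - μ * (1 - κ) = -μ * (1 - κ) + -(1 + μ) * κ by ring,
      Real.rpow_add hJv, Real.rpow_add hJu]
  ring
end

section
/- Let n ≥ 1, μ ∈ (1/2, 1), C₀, C₁ ≥ 0, and let I : ℝⁿ → ℝ be differentiable with ‖∇I(w)‖ ≤ C₀⟨w⟩^{-1-μ} for all w ∈ ℝⁿ. Let ξ ∈ ℝⁿ with ξ ≠ 0, and let y : [1,∞) → ℝⁿ be continuous with ‖y(s) − 2sξ‖ ≤ C₁ s^{1−μ} for all s ≥ 1. Then the function s ↦ I(y(s)) − I(2sξ) is (absolutely) Lebesgue integrable on [1,∞). -/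
open Real MeasureTheory Set

/-- Let `n ≥ 1`, `μ ∈ (1/2, 1)`, `C₀, C₁ ≥ 0`, and `I : ℝⁿ → ℝ`
differentiable with `‖∇I(w)‖ ≤ C₀⟨w⟩^{-1-μ}`.  Let `ξ ≠ 0` and let `y : [1,∞) → ℝⁿ`
be continuous with `‖y(s) − 2sξ‖ ≤ C₁ s^{1-μ}` for `s ≥ 1`.  Then
`s ↦ I(y(s)) − I(2sξ)` is Lebesgue integrable on `[1,∞)`. -/
theorem stmt7 (n : ℕ) (hn : 1 ≤ n) (μ : ℝ) (hμ : μ ∈ Set.Ioo (1/2 : ℝ) 1)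
    (C₀ C₁ : ℝ) (hC₀ : 0 ≤ C₀) (hC₁ : 0 ≤ C₁)
    (I : EuclideanSpace ℝ (Fin n) → ℝ) (hI : Differentiable ℝ I)
    (hIg : ∀ w, ‖gradient I w‖ ≤ C₀ * (Real.sqrt (1 + ‖w‖ ^ 2)) ^ (-1 - μ))
    (ξ : EuclideanSpace ℝ (Fin n)) (hξ : ξ ≠ 0)
    (y : ℝ → EuclideanSpace ℝ (Fin n)) (hy : ContinuousOn y (Set.Ici (1:ℝ)))
    (hyb : ∀ s : ℝ, 1 ≤ s → ‖y s - (2 * s) • ξ‖ ≤ C₁ * s ^ (1 - μ)) :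
    MeasureTheory.IntegrableOn (fun s : ℝ => I (y s) - I ((2 * s) • ξ))
      (Set.Ici (1:ℝ)) := by
  obtain ⟨hμ1, hμ2⟩ := hμ
  have hμ0 : (0:ℝ) < μ := by linarith
  set ε := ‖ξ‖ with hεdef
  have hε0 : 0 < ε := norm_pos_iff.mpr hξ
  set s₀ : ℝ := max 1 ((C₁/ε) ^ (1/μ)) with hs₀def
  have hs₀1 : (1:ℝ) ≤ s₀ := le_max_left _ _
  have hs₀0 : (0:ℝ) < s₀ := lt_of_lt_of_le one_pos hs₀1
  have hIc : Continuous I := hI.continuous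
  have hcont : ContinuousOn (fun s : ℝ => I (y s) - I ((2*s) • ξ)) (Set.Ici 1) := by
    apply ContinuousOn.sub
    · exact hIc.comp_continuousOn hy
    · exact (hIc.comp ((continuous_const.mul continuous_id).smul continuous_const)).continuousOn
  -- norm of fderiv equals norm of gradient
  have hfd : ∀ w, ‖fderiv ℝ I w‖ = ‖gradient I w‖ := by
    intro w
    rw [gradient, LinearIsometryEquiv.norm_map]
  -- key pointwise bound for s ≥ s₀
  have key : ∀ s : ℝ, s₀ ≤ s →
      |I (y s) - I ((2*s) • ξ)| ≤ (C₀ * C₁ * ε ^ (-1-μ)) * s ^ (-(2*μ)) := by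
    intro s hs
    have hs1 : (1:ℝ) ≤ s := le_trans hs₀1 hs
    have hs0 : (0:ℝ) < s := lt_of_lt_of_le one_pos hs1
    have hεs : 0 < ε * s := mul_pos hε0 hs0
    -- C₁ * s ^ (1-μ) ≤ ε * s
    have hCb : C₁ * s ^ (1-μ) ≤ ε * s := by
      have h1 : C₁ / ε ≤ s ^ μ := by
        have h2 : (C₁/ε) ^ (1/μ) ≤ s := le_trans (le_max_right _ _) hs
        have h3 : ((C₁/ε) ^ (1/μ)) ^ μ ≤ s ^ μ :=
          Real.rpow_le_rpow (Real.rpow_nonneg (div_nonneg hC₁ hε0.le) _) h2 hμ0.le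
        rwa [← Real.rpow_mul (div_nonneg hC₁ hε0.le), one_div,
          inv_mul_cancel₀ hμ0.ne', Real.rpow_one] at h3
      have h4 : C₁ ≤ ε * s ^ μ := by
        rw [div_le_iff₀ hε0] at h1; linarith [h1]
      calc C₁ * s ^ (1-μ) ≤ (ε * s ^ μ) * s ^ (1-μ) :=
            mul_le_mul_of_nonneg_right h4 (Real.rpow_nonneg hs0.le _)
        _ = ε * s := by
            rw [mul_assoc, ← Real.rpow_add hs0]
            norm_num
    set a := (2*s) • ξ with ha
    set b := y s with hb
    have hba : ‖b - a‖ ≤ C₁ * s ^ (1-μ) := hyb s hs1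
    -- lower bound for points on the segment
    have hseg : ∀ w ∈ segment ℝ a b, ε * s ≤ ‖w‖ := by
      intro w hw
      obtain ⟨u, v, hu, hv, huv, hw⟩ := hw
      have hwa : ‖w - a‖ ≤ ‖b - a‖ := by
        have : w - a = v • (b - a) := by
          rw [← hw]
          have : u = 1 - v := by linarith
          rw [this]
          module
        rw [this, norm_smul, Real.norm_eq_abs, abs_of_nonneg hv]
        nlinarith [norm_nonneg (b - a), hv, huv]
      have hna : ‖a‖ = 2 * (ε * s) := by
        rw [ha, norm_smul, Real.norm_eq_abs, abs_of_nonneg (by linarith : (0:ℝ) ≤ 2*s)]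
        ring
      have h5 : ‖a‖ - ‖w‖ ≤ ‖w - a‖ := by
        rw [← norm_sub_rev]; exact norm_sub_norm_le a w
      have : ‖w‖ ≥ 2 * (ε*s) - (C₁ * s ^ (1-μ)) := by
        have := le_trans hwa hba
        linarith
      linarith
    -- bound on fderiv on the segment
    have hbound : ∀ w ∈ segment ℝ a b, ‖fderiv ℝ I w‖ ≤ C₀ * (ε*s) ^ (-1-μ) := by
      intro w hw
      rw [hfd]
      refine le_trans (hIg w) ?_
      have h6 : ε * s ≤ Real.sqrt (1 + ‖w‖ ^ 2) := by
        refine le_trans (hseg w hw) ?_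
        calc ‖w‖ = Real.sqrt (‖w‖ ^ 2) := (Real.sqrt_sq (norm_nonneg w)).symm
          _ ≤ Real.sqrt (1 + ‖w‖ ^ 2) := Real.sqrt_le_sqrt (by linarith)
      exact mul_le_mul_of_nonneg_left
        (Real.rpow_le_rpow_of_nonpos hεs h6 (by linarith)) hC₀
    have hmvt : ‖I b - I a‖ ≤ (C₀ * (ε*s) ^ (-1-μ)) * ‖b - a‖ :=
      (convex_segment a b).norm_image_sub_le_of_norm_fderiv_le
        (fun w _ => hI w) hbound (left_mem_segment ℝ a b) (right_mem_segment ℝ a b)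
    rw [Real.norm_eq_abs] at hmvt
    calc |I b - I a| ≤ (C₀ * (ε*s) ^ (-1-μ)) * ‖b - a‖ := hmvt
      _ ≤ (C₀ * (ε*s) ^ (-1-μ)) * (C₁ * s ^ (1-μ)) :=
          mul_le_mul_of_nonneg_left hba
            (mul_nonneg hC₀ (Real.rpow_nonneg hεs.le _))
      _ = (C₀ * C₁ * ε ^ (-1-μ)) * (s ^ (-1-μ) * s ^ (1-μ)) := by
          rw [Real.mul_rpow hε0.le hs0.le]; ring
      _ = (C₀ * C₁ * ε ^ (-1-μ)) * s ^ (-(2*μ)) := by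
          rw [← Real.rpow_add hs0, show -1-μ+(1-μ) = -(2*μ) from by ring]
  -- assemble integrability
  have hsub : Set.Ici (1:ℝ) ⊆ Set.Icc 1 s₀ ∪ Set.Ioi s₀ := by
    intro x hx
    rcases le_or_gt x s₀ with h | h
    · exact Or.inl ⟨hx, h⟩
    · exact Or.inr h
  refine MeasureTheory.IntegrableOn.mono_set ?_ hsub
  apply MeasureTheory.IntegrableOn.union
  · exact (hcont.mono (Set.Icc_subset_Ici_self)).integrableOn_Icc
  · have hmeas : AEStronglyMeasurable (fun s : ℝ => I (y s) - I ((2*s) • ξ))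
        (volume.restrict (Set.Ioi s₀)) :=
      ((hcont.mono (fun x hx => le_trans hs₀1 (le_of_lt hx))).aestronglyMeasurable
        measurableSet_Ioi)
    refine MeasureTheory.Integrable.mono'
      (g := fun s : ℝ => (C₀ * C₁ * ε ^ (-1-μ)) * s ^ (-(2*μ))) ?_ hmeas ?_
    · exact (integrableOn_Ioi_rpow_of_lt (by linarith) hs₀0).const_mul _
    · filter_upwards [ae_restrict_mem measurableSet_Ioi] with s hs
      rw [Real.norm_eq_abs]
      exact key s (le_of_lt hs)
end

section
/- For all ε > 0 and all λ, λ'' ∈ ℝ, the function λ' ↦ [π^{-1} ε/((λ−λ')² + ε²)] · [π^{-1} ε/((λ'−λ'')² + ε²)] is Lebesgue integrable on ℝ and ∫_ℝ π^{-1} ε/((λ−λ')² + ε²) · π^{-1} ε/((λ'−λ'')² + ε²) dλ' = π^{-1} · 2ε/((λ−λ'')² + 4ε²). (In the notation δ_{ε,λ}(λ') := π^{-1} ε/((λ−λ')² + ε²): ∫ δ_{ε,λ'}(λ) δ_{ε,λ''}(λ') dλ' = δ_{2ε,λ''}(λ).) -/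
open Real MeasureTheory Filter Set Topology

private lemma tendsto_inv_atBot_zero' : Filter.Tendsto (fun x : ℝ => x⁻¹) Filter.atBot (nhds 0) := by
  have h : Filter.Tendsto (fun x : ℝ => -(-x)⁻¹) Filter.atBot (nhds (-0)) :=
    Filter.Tendsto.neg ((tendsto_inv_atTop_zero (𝕜 := ℝ)).comp tendsto_neg_atBot_atTop)
  rw [neg_zero] at h
  exact h.congr fun x => by rw [inv_neg, neg_neg]

private lemma core_integrable (c : ℝ) :
    Integrable (fun x : ℝ => (((x - c) ^ 2 + 1) * (x ^ 2 + 1))⁻¹) := by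
  apply integrable_inv_one_add_sq.mono'
  · exact (Continuous.inv₀ (by continuity) fun x => by positivity).aestronglyMeasurable
  · refine ae_of_all _ fun x => ?_
    rw [Real.norm_eq_abs, abs_of_nonneg (by positivity)]
    rw [show (1 : ℝ) + x ^ 2 = x ^ 2 + 1 by ring]
    apply inv_anti₀ (by positivity)
    nlinarith [sq_nonneg (x - c), sq_nonneg x]

private lemma tendsto_log_ratio (c : ℝ) {l : Filter ℝ}
    (h0 : Tendsto (fun x : ℝ => x⁻¹) l (𝓝 0)) (hne : ∀ᶠ x in l, x ≠ 0) :
    Tendsto (fun x => Real.log (x ^ 2 + 1) - Real.log ((x - c) ^ 2 + 1)) l (𝓝 0) := by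
  have h1 : Tendsto (fun x : ℝ => (x ^ 2 + 1) / ((x - c) ^ 2 + 1)) l (𝓝 1) := by
    have h2 : Tendsto (fun x : ℝ => (1 + x⁻¹ ^ 2) / ((1 - c * x⁻¹) ^ 2 + x⁻¹ ^ 2)) l
        (𝓝 ((1 + 0 ^ 2) / ((1 - c * 0) ^ 2 + 0 ^ 2))) := by
      apply Tendsto.div
      · exact tendsto_const_nhds.add (h0.pow 2)
      · exact ((tendsto_const_nhds.sub (h0.const_mul c)).pow 2).add (h0.pow 2)
      · norm_num
    norm_num at h2
    refine h2.congr' ?_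
    filter_upwards [hne] with x hx
    have hx2 : x⁻¹ ≠ 0 := inv_ne_zero hx
    rw [div_eq_div_iff (by positivity) (by positivity)]
    field_simp
  have h3 := (Real.continuousAt_log one_ne_zero).tendsto.comp h1
  rw [Real.log_one] at h3
  exact h3.congr fun x => Real.log_div (by positivity) (by positivity)

private lemma tendsto_x_div {l : Filter ℝ}
    (h0 : Tendsto (fun x : ℝ => x⁻¹) l (𝓝 0)) (hne : ∀ᶠ x in l, x ≠ 0) :
    Tendsto (fun x : ℝ => x / (x ^ 2 + 1)) l (𝓝 0) := by
  have h2 : Tendsto (fun x : ℝ => x⁻¹ / (1 + x⁻¹ ^ 2)) l (𝓝 (0 / (1 + 0 ^ 2))) :=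
    h0.div (tendsto_const_nhds.add (h0.pow 2)) (by norm_num)
  norm_num at h2
  refine h2.congr' ?_
  filter_upwards [hne] with x hx
  have hx2 : x⁻¹ ≠ 0 := inv_ne_zero hx
  rw [div_eq_div_iff (by positivity) (by positivity)]
  field_simp

private lemma core_integral (c : ℝ) :
    ∫ x : ℝ, (((x - c) ^ 2 + 1) * (x ^ 2 + 1))⁻¹ = 2 * π / (c ^ 2 + 4) := by
  have hint := core_integrable c
  rw [← intervalIntegral.integral_Iic_add_Ioi (b := 0) hint.integrableOn hint.integrableOn]
  rcases eq_or_ne c 0 with rfl | hc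
  · -- F x = (arctan x + x/(x²+1))/2
    set F : ℝ → ℝ := fun x => (Real.arctan x + x / (x ^ 2 + 1)) / 2 with hF
    have hd : ∀ x : ℝ, HasDerivAt F ((((x - 0) ^ 2 + 1) * (x ^ 2 + 1))⁻¹) x := by
      intro x
      have h1 : HasDerivAt (fun x : ℝ => x ^ 2 + 1) (2 * x) x := by
        simpa using (hasDerivAt_pow 2 x).add_const 1
      have h5 : HasDerivAt (fun x : ℝ => x / (x ^ 2 + 1))
          ((1 * (x ^ 2 + 1) - x * (2 * x)) / (x ^ 2 + 1) ^ 2) x :=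
        (hasDerivAt_id x).div h1 (by positivity)
      have := ((Real.hasDerivAt_arctan x).add h5).div_const 2
      refine this.congr_deriv (Eq.symm ?_)
      have p1 : (0:ℝ) < x ^ 2 + 1 := by positivity
      field_simp
      ring
    have hup : Tendsto F atTop (𝓝 ((π / 2 + 0) / 2)) :=
      ((tendsto_nhds_of_tendsto_nhdsWithin Real.tendsto_arctan_atTop).add
        (tendsto_x_div tendsto_inv_atTop_zero (eventually_ne_atTop 0))).div_const 2
    have hdown : Tendsto F atBot (𝓝 ((-(π / 2) + 0) / 2)) :=
      ((tendsto_nhds_of_tendsto_nhdsWithin Real.tendsto_arctan_atBot).add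
        (tendsto_x_div tendsto_inv_atBot_zero' (eventually_ne_atBot 0))).div_const 2
    rw [integral_Iic_of_hasDerivAt_of_tendsto' (fun x _ => hd x) hint.integrableOn hdown,
      integral_Ioi_of_hasDerivAt_of_tendsto' (fun x _ => hd x) hint.integrableOn hup]
    norm_num
    ring
  · set F : ℝ → ℝ := fun x =>
      (c * (c ^ 2 + 4))⁻¹ * (Real.log (x ^ 2 + 1) - Real.log ((x - c) ^ 2 + 1)) +
        (c ^ 2 + 4)⁻¹ * (Real.arctan x + Real.arctan (x - c)) with hF
    have hd : ∀ x : ℝ, HasDerivAt F ((((x - c) ^ 2 + 1) * (x ^ 2 + 1))⁻¹) x := by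
      intro x
      have p1 : (0:ℝ) < x ^ 2 + 1 := by positivity
      have p2 : (0:ℝ) < (x - c) ^ 2 + 1 := by positivity
      have h1 : HasDerivAt (fun x : ℝ => Real.log (x ^ 2 + 1)) (2 * x / (x ^ 2 + 1)) x := by
        have hp : HasDerivAt (fun x : ℝ => x ^ 2 + 1) (2 * x) x := by
          simpa using (hasDerivAt_pow 2 x).add_const 1
        simpa using hp.log p1.ne'
      have h2 : HasDerivAt (fun x : ℝ => Real.log ((x - c) ^ 2 + 1))
          (2 * (x - c) / ((x - c) ^ 2 + 1)) x := by
        have hp : HasDerivAt (fun x : ℝ => (x - c) ^ 2 + 1) (2 * (x - c)) x := by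
          have := (((hasDerivAt_id x).sub_const c).pow 2).add_const 1
          simpa using this
        simpa using hp.log p2.ne'
      have h4 : HasDerivAt (fun x : ℝ => Real.arctan (x - c)) (1 / (1 + (x - c) ^ 2)) x := by
        have := (Real.hasDerivAt_arctan (x - c)).comp x ((hasDerivAt_id x).sub_const c)
        simpa [Function.comp_def] using this
      have := (((h1.sub h2).const_mul (c * (c ^ 2 + 4))⁻¹).add
        (((Real.hasDerivAt_arctan x).add h4).const_mul (c ^ 2 + 4)⁻¹))
      refine this.congr_deriv (Eq.symm ?_)
      have p3 : c ^ 2 + 4 ≠ 0 := by positivity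
      field_simp
      ring
    have hup : Tendsto F atTop
        (𝓝 ((c * (c ^ 2 + 4))⁻¹ * 0 + (c ^ 2 + 4)⁻¹ * (π / 2 + π / 2))) := by
      apply Tendsto.add
      · exact (tendsto_log_ratio c tendsto_inv_atTop_zero (eventually_ne_atTop 0)).const_mul _
      · refine Tendsto.const_mul _ (Tendsto.add ?_ ?_)
        · exact tendsto_nhds_of_tendsto_nhdsWithin Real.tendsto_arctan_atTop
        · have hsub : Tendsto (fun x : ℝ => x - c) atTop atTop := by
            simpa [sub_eq_add_neg] using tendsto_atTop_add_const_right atTop (-c) tendsto_id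
          exact (tendsto_nhds_of_tendsto_nhdsWithin Real.tendsto_arctan_atTop).comp hsub
    have hdown : Tendsto F atBot
        (𝓝 ((c * (c ^ 2 + 4))⁻¹ * 0 + (c ^ 2 + 4)⁻¹ * (-(π / 2) + -(π / 2)))) := by
      apply Tendsto.add
      · exact (tendsto_log_ratio c tendsto_inv_atBot_zero' (eventually_ne_atBot 0)).const_mul _
      · refine Tendsto.const_mul _ (Tendsto.add ?_ ?_)
        · exact tendsto_nhds_of_tendsto_nhdsWithin Real.tendsto_arctan_atBot
        · have hsub : Tendsto (fun x : ℝ => x - c) atBot atBot := by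
            simpa [sub_eq_add_neg] using tendsto_atBot_add_const_right atBot (-c) tendsto_id
          exact (tendsto_nhds_of_tendsto_nhdsWithin Real.tendsto_arctan_atBot).comp hsub
    rw [integral_Iic_of_hasDerivAt_of_tendsto' (fun x _ => hd x) hint.integrableOn hdown,
      integral_Ioi_of_hasDerivAt_of_tendsto' (fun x _ => hd x) hint.integrableOn hup]
    have p3 : c ^ 2 + 4 ≠ 0 := by positivity
    field_simp
    ring

/-- With `δ_{ε,λ}(λ') = π⁻¹ ε / ((λ−λ')² + ε²)`, for all `ε > 0` and
`λ, λ'' ∈ ℝ` the function `λ' ↦ δ_{ε,λ'}(λ) · δ_{ε,λ''}(λ')` is Lebesgue integrable on `ℝ`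
and `∫ δ_{ε,λ'}(λ) δ_{ε,λ''}(λ') dλ' = δ_{2ε,λ''}(λ)`. -/
theorem stmt9 (ε : ℝ) (hε : 0 < ε) (lam lam'' : ℝ) :
    Integrable (fun lam' : ℝ =>
      (π⁻¹ * ε / ((lam - lam') ^ 2 + ε ^ 2)) *
        (π⁻¹ * ε / ((lam' - lam'') ^ 2 + ε ^ 2)))
    ∧ ∫ lam' : ℝ,
        (π⁻¹ * ε / ((lam - lam') ^ 2 + ε ^ 2)) *
          (π⁻¹ * ε / ((lam' - lam'') ^ 2 + ε ^ 2))
        = π⁻¹ * (2 * ε) / ((lam - lam'') ^ 2 + 4 * ε ^ 2) := by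
  set c : ℝ := (lam - lam'') / ε with hc
  have hεne : ε ≠ 0 := hε.ne'
  have hπ : π ≠ 0 := Real.pi_ne_zero
  have hgeq : (fun x : ℝ =>
      (π⁻¹ * ε / ((lam - x) ^ 2 + ε ^ 2)) * (π⁻¹ * ε / ((x - lam'') ^ 2 + ε ^ 2))) =
      fun x : ℝ => ((π ^ 2)⁻¹ * (ε ^ 2)⁻¹) *
        ((((x - lam'') / ε - c) ^ 2 + 1) * (((x - lam'') / ε) ^ 2 + 1))⁻¹ := by
    funext x
    have p1 : (0:ℝ) < (lam - x) ^ 2 + ε ^ 2 := by positivity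
    have p2 : (0:ℝ) < (x - lam'') ^ 2 + ε ^ 2 := by positivity
    rw [hc]
    field_simp
    ring
  have hint : Integrable (fun x : ℝ =>
      ((((x - lam'') / ε - c) ^ 2 + 1) * (((x - lam'') / ε) ^ 2 + 1))⁻¹) := by
    have h1 : Integrable (fun y : ℝ => (((y / ε - c) ^ 2 + 1) * ((y / ε) ^ 2 + 1))⁻¹) :=
      (core_integrable c).comp_div hεne
    exact h1.comp_sub_right lam''
  constructor
  · rw [hgeq]
    exact hint.const_mul _
  · rw [hgeq, integral_const_mul]
    have h2 : ∫ x : ℝ,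
        ((((x - lam'') / ε - c) ^ 2 + 1) * (((x - lam'') / ε) ^ 2 + 1))⁻¹
        = ∫ y : ℝ, (((y / ε - c) ^ 2 + 1) * ((y / ε) ^ 2 + 1))⁻¹ :=
      integral_sub_right_eq_self (fun y : ℝ => (((y / ε - c) ^ 2 + 1) * ((y / ε) ^ 2 + 1))⁻¹) lam''
    rw [h2, MeasureTheory.Measure.integral_comp_div (fun y : ℝ => (((y - c) ^ 2 + 1) * (y ^ 2 + 1))⁻¹) ε,
      core_integral c, abs_of_pos hε, smul_eq_mul, hc]
    have p4 : (0:ℝ) < (lam - lam'') ^ 2 + 4 * ε ^ 2 := by positivity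
    have p5 : ((lam - lam'') / ε) ^ 2 + 4 ≠ 0 := by positivity
    field_simp
end

section
/- Let H be a complex Hilbert space, I ⊆ ℝ a nonempty open interval, v : I → H weakly continuous (i.e. for every w ∈ H the map λ ↦ ⟪w, v(λ)⟫ is continuous on I), and g : I → ℝ continuous. If ‖v(λ)‖² ≤ g(λ) for Lebesgue-almost every λ ∈ I, then ‖v(λ)‖² ≤ g(λ) for every λ ∈ I. -/
open MeasureTheory Filter Topology

/-- Let `H` be a complex Hilbert space, `I ⊆ ℝ` a nonempty open interval,
`v : I → H` weakly continuous, and `g : I → ℝ` continuous.  If `‖v(λ)‖² ≤ g(λ)` for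
Lebesgue-a.e. `λ ∈ I`, then `‖v(λ)‖² ≤ g(λ)` for every `λ ∈ I`. -/
theorem stmt11 {H : Type*} [NormedAddCommGroup H] [InnerProductSpace ℂ H]
    (I : Set ℝ) (hIopen : IsOpen I) (hIconn : I.OrdConnected) (hne : I.Nonempty)
    (v : ℝ → H) (hv : ∀ w : H, ContinuousOn (fun lam : ℝ => (inner ℂ w (v lam) : ℂ)) I)
    (g : ℝ → ℝ) (hg : ContinuousOn g I)
    (hae : ∀ᵐ lam ∂(volume : Measure ℝ), lam ∈ I → ‖v lam‖ ^ 2 ≤ g lam) :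
    ∀ lam ∈ I, ‖v lam‖ ^ 2 ≤ g lam := by
  intro lam0 hlam0
  set S : Set ℝ := {lam | lam ∈ I ∧ ‖v lam‖ ^ 2 ≤ g lam} with hS
  have hSsub : S ⊆ I := fun x hx => hx.1
  -- the filter 𝓝[S] lam0 is nontrivial
  have hclus : (𝓝[S] lam0).NeBot := by
    rw [← mem_closure_iff_nhdsWithin_neBot]
    rw [mem_closure_iff]
    intro U hU hU0
    by_contra hdisj
    rw [Set.not_nonempty_iff_eq_empty] at hdisj
    have hsub : U ∩ I ⊆ {lam | ¬ (lam ∈ I → ‖v lam‖ ^ 2 ≤ g lam)} := by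
      intro x hx hx'
      exact Set.eq_empty_iff_forall_notMem.mp hdisj x ⟨hx.1, hx.2, hx' hx.2⟩
    have hnull : volume (U ∩ I) = 0 :=
      measure_mono_null hsub hae
    have hpos : 0 < volume (U ∩ I) :=
      (hU.inter hIopen).measure_pos volume ⟨lam0, hU0, hlam0⟩
    exact hpos.ne' hnull
  -- limit of the inner product along S
  have hle : 𝓝[S] lam0 ≤ 𝓝[I] lam0 := nhdsWithin_mono _ hSsub
  have hf : Tendsto (fun lam => ‖(inner ℂ (v lam0) (v lam) : ℂ)‖) (𝓝[S] lam0)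
      (𝓝 (‖v lam0‖ ^ 2)) := by
    have h1 : Tendsto (fun lam => (inner ℂ (v lam0) (v lam) : ℂ)) (𝓝[S] lam0)
        (𝓝 (inner ℂ (v lam0) (v lam0))) :=
      (hv (v lam0) lam0 hlam0).tendsto.mono_left hle
    have h2 := h1.norm
    have h3 : ‖(inner ℂ (v lam0) (v lam0) : ℂ)‖ = ‖v lam0‖ ^ 2 := by
      rw [inner_self_eq_norm_sq_to_K]
      simp [Complex.norm_natCast]
    rwa [h3] at h2
  have hgt : Tendsto g (𝓝[S] lam0) (𝓝 (g lam0)) :=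
    (hg lam0 hlam0).tendsto.mono_left hle
  have hevS : ∀ᶠ lam in 𝓝[S] lam0, lam ∈ S := eventually_mem_nhdsWithin
  -- g lam0 ≥ 0
  have hg0 : 0 ≤ g lam0 := by
    refine ge_of_tendsto hgt ?_
    filter_upwards [hevS] with lam hlam
    exact le_trans (sq_nonneg _) hlam.2
  -- key inequality by passing to limit
  have hbound : Tendsto (fun lam => ‖v lam0‖ * Real.sqrt (g lam)) (𝓝[S] lam0)
      (𝓝 (‖v lam0‖ * Real.sqrt (g lam0))) :=
    tendsto_const_nhds.mul ((Real.continuous_sqrt.tendsto _).comp hgt)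
  have hkey : ‖v lam0‖ ^ 2 ≤ ‖v lam0‖ * Real.sqrt (g lam0) := by
    refine le_of_tendsto_of_tendsto hf hbound ?_
    filter_upwards [hevS] with lam hlam
    have h1 : ‖(inner ℂ (v lam0) (v lam) : ℂ)‖ ≤ ‖v lam0‖ * ‖v lam‖ := norm_inner_le_norm _ _
    have h2 : ‖v lam‖ ≤ Real.sqrt (g lam) := by
      have := Real.sqrt_le_sqrt hlam.2
      rwa [Real.sqrt_sq (norm_nonneg _)] at this
    calc ‖(inner ℂ (v lam0) (v lam) : ℂ)‖ ≤ ‖v lam0‖ * ‖v lam‖ := h1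
      _ ≤ ‖v lam0‖ * Real.sqrt (g lam) := by
          exact mul_le_mul_of_nonneg_left h2 (norm_nonneg _)
  have hsq : Real.sqrt (g lam0) ^ 2 = g lam0 := Real.sq_sqrt hg0
  nlinarith [sq_nonneg (‖v lam0‖ - Real.sqrt (g lam0)), norm_nonneg (v lam0),
    Real.sqrt_nonneg (g lam0)]
end

section
/- Let H be a complex Hilbert space, T a bounded self-adjoint operator on H, φ ∈ H, and ε > 0. Then for every λ ∈ ℝ the operators T − (λ + iε)·Id and T − (λ − iε)·Id are invertible in the bounded operators on H, the function λ ↦ ⟪φ, ((T − (λ + iε))^{-1} − (T − (λ − iε))^{-1}) φ⟫ is Lebesgue integrable on ℝ, and ∫_ℝ ⟪φ, ((T − (λ + iε))^{-1} − (T − (λ − iε))^{-1}) φ⟫ dλ = 2πi · ‖φ‖². -/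
open MeasureTheory

namespace Stmt17Aux

open Complex Real

lemma aux1 (x ε : ℝ) (hε : ε ≠ 0) :
    ((x:ℂ) - ε*Complex.I)⁻¹ - ((x:ℂ) + ε*Complex.I)⁻¹
      = ((2*ε/(x^2+ε^2) : ℝ) : ℂ) * Complex.I := by
  have hd : (x:ℝ)^2 + ε^2 ≠ 0 := by positivity
  have h1 : (x:ℂ) - ε*Complex.I ≠ 0 := by
    intro h
    have := congrArg Complex.im h
    simp at this
    exact hε this
  have h2 : (x:ℂ) + ε*Complex.I ≠ 0 := by
    intro h
    have := congrArg Complex.im h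
    simp at this
    exact hε this
  have hdc : ((x:ℂ)^2 + (ε:ℂ)^2) ≠ 0 := by
    have : ((x:ℂ)^2 + (ε:ℂ)^2) = ((x^2 + ε^2 : ℝ) : ℂ) := by push_cast; ring
    rw [this]
    exact_mod_cast hd
  rw [inv_sub_inv h1 h2]
  push_cast
  have hm : ((x:ℂ) - ε*I)*((x:ℂ)+ε*I) = (x:ℂ)^2 + (ε:ℂ)^2 := by
    ring_nf
    rw [Complex.I_sq]
    ring
  rw [hm, div_eq_iff hdc]
  field_simp
  ring

lemma aux2 (c ε : ℝ) (hε : 0 < ε) (a b : ℝ) :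
    ∫ lam in a..b, 2*ε/((c-lam)^2+ε^2)
      = 2*(Real.arctan ((b-c)/ε) - Real.arctan ((a-c)/ε)) := by
  have hcont : Continuous (fun lam : ℝ => 2*ε/((c-lam)^2+ε^2)) := by
    apply Continuous.div
    · fun_prop
    · fun_prop
    · intro lam; positivity
  have hderiv : ∀ lam ∈ Set.uIcc a b,
      HasDerivAt (fun t : ℝ => 2 * Real.arctan ((t - c)/ε)) (2*ε/((c-lam)^2+ε^2)) lam := by
    intro lam _
    have h1 : HasDerivAt (fun t : ℝ => (t - c)/ε) (1/ε) lam := by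
      simpa using ((hasDerivAt_id lam).sub_const c).div_const ε
    have h2 := (Real.hasDerivAt_arctan ((lam - c)/ε)).comp lam h1
    have h3 := h2.const_mul 2
    refine h3.congr_deriv ?_
    field_simp
    ring
  rw [intervalIntegral.integral_eq_sub_of_hasDerivAt hderiv (hcont.intervalIntegrable a b)]
  ring

lemma inv_cfc {H : Type*} [NormedAddCommGroup H] [InnerProductSpace ℂ H]
    [CompleteSpace H] (T : H →L[ℂ] H) (hT : IsSelfAdjoint T) (z : ℂ) (hz : z.im ≠ 0) :
    IsUnit (T - z • (1 : H →L[ℂ] H)) ∧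
    Ring.inverse (T - z • (1 : H →L[ℂ] H)) = cfc (fun t : ℂ => ((t.re:ℂ) - z)⁻¹) T := by
  have hstar : IsStarNormal T := hT.isStarNormal
  have hre : ∀ t ∈ spectrum ℂ T, ((t.re : ℂ)) = t := fun t ht => (hT.mem_spectrum_eq_re ht).symm
  have hne : ∀ t : ℂ, ((t.re:ℂ) - z) ≠ 0 := by
    intro t h
    apply hz
    have := congrArg Complex.im h
    simpa using this
  have hcont : Continuous (fun t : ℂ => ((t.re:ℂ) - z)⁻¹) :=
    ((Complex.continuous_ofReal.comp Complex.continuous_re).sub continuous_const).inv₀ hne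
  have hTz : T - z • (1 : H →L[ℂ] H) = cfc (fun t : ℂ => t - z) T := by
    rw [cfc_sub _ _ T (by fun_prop) (by fun_prop), cfc_id' ℂ T, cfc_const z T,
      Algebra.algebraMap_eq_smul_one]
  have key : ∀ t ∈ spectrum ℂ T, t - z = (t.re:ℂ) - z := fun t ht => by rw [hre t ht]
  have h1 : cfc (fun t : ℂ => ((t.re:ℂ) - z)⁻¹) T * (T - z • (1 : H →L[ℂ] H)) = 1 := by
    rw [hTz, ← cfc_mul _ _ T (hcont.continuousOn) (by fun_prop)]
    rw [cfc_congr (g := fun _ => (1:ℂ)) (fun t ht => by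
      simp only [key t ht]
      exact inv_mul_cancel₀ (hne t))]
    exact cfc_const_one ℂ T
  have h2 : (T - z • (1 : H →L[ℂ] H)) * cfc (fun t : ℂ => ((t.re:ℂ) - z)⁻¹) T = 1 := by
    rw [hTz, ← cfc_mul _ _ T (by fun_prop) (hcont.continuousOn)]
    rw [cfc_congr (g := fun _ => (1:ℂ)) (fun t ht => by
      simp only [key t ht]
      exact mul_inv_cancel₀ (hne t))]
    exact cfc_const_one ℂ T
  have hu : IsUnit (T - z • (1 : H →L[ℂ] H)) :=
    ⟨⟨T - z • (1 : H →L[ℂ] H), cfc (fun t : ℂ => ((t.re:ℂ) - z)⁻¹) T, h2, h1⟩, rfl⟩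
  refine ⟨hu, ?_⟩
  calc Ring.inverse (T - z • (1 : H →L[ℂ] H))
      = Ring.inverse (T - z • (1 : H →L[ℂ] H)) * ((T - z • (1 : H →L[ℂ] H)) *
        cfc (fun t : ℂ => ((t.re:ℂ) - z)⁻¹) T) := by rw [h2, mul_one]
    _ = (Ring.inverse (T - z • (1 : H →L[ℂ] H)) * (T - z • (1 : H →L[ℂ] H))) *
        cfc (fun t : ℂ => ((t.re:ℂ) - z)⁻¹) T := by rw [mul_assoc]
    _ = cfc (fun t : ℂ => ((t.re:ℂ) - z)⁻¹) T := by rw [Ring.inverse_mul_cancel _ hu, one_mul]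

end Stmt17Aux

set_option maxHeartbeats 2000000 in
/-- Let `T` be a bounded self-adjoint operator on a complex Hilbert
space `H`, `φ ∈ H` and `ε > 0`.  Then for every `λ ∈ ℝ` the operators `T − (λ ± iε)` are
invertible, the function `λ ↦ ⟪φ, ((T − (λ+iε))⁻¹ − (T − (λ−iε))⁻¹)φ⟫` is Lebesgue
integrable on `ℝ`, and its integral equals `2πi‖φ‖²`. -/
theorem stmt17 {H : Type*} [NormedAddCommGroup H] [InnerProductSpace ℂ H]
    [CompleteSpace H] (T : H →L[ℂ] H) (hT : IsSelfAdjoint T) (φ : H)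
    (ε : ℝ) (hε : 0 < ε) :
    (∀ lam : ℝ,
      IsUnit (T - ((lam : ℂ) + (ε : ℂ) * Complex.I) • (1 : H →L[ℂ] H)) ∧
      IsUnit (T - ((lam : ℂ) - (ε : ℂ) * Complex.I) • (1 : H →L[ℂ] H)))
    ∧ Integrable (fun lam : ℝ =>
        (inner ℂ φ ((Ring.inverse (T - ((lam : ℂ) + (ε : ℂ) * Complex.I) • (1 : H →L[ℂ] H))
          - Ring.inverse (T - ((lam : ℂ) - (ε : ℂ) * Complex.I) • (1 : H →L[ℂ] H))) φ) : ℂ))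
    ∧ ∫ lam : ℝ,
        (inner ℂ φ ((Ring.inverse (T - ((lam : ℂ) + (ε : ℂ) * Complex.I) • (1 : H →L[ℂ] H))
          - Ring.inverse (T - ((lam : ℂ) - (ε : ℂ) * Complex.I) • (1 : H →L[ℂ] H))) φ) : ℂ)
        = 2 * (Real.pi : ℂ) * Complex.I * (‖φ‖ : ℂ) ^ 2 := by
  classical
  rcases subsingleton_or_nontrivial H with hsub | hnt
  · have hφ : φ = 0 := Subsingleton.elim φ 0
    have hone : (1 : H →L[ℂ] H) = 0 := Subsingleton.elim _ _
    refine ⟨fun lam => ⟨isUnit_of_subsingleton _, isUnit_of_subsingleton _⟩, ?_, ?_⟩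
    · simp [hφ]
    · simp [hφ]
  open Complex Real Stmt17Aux Filter in
  -- notation
  have hstar : IsStarNormal T := hT.isStarNormal
  set M : ℝ := ‖T‖ with hM
  have hM0 : 0 ≤ M := norm_nonneg T
  have himp : ∀ lam : ℝ, ((lam : ℂ) + (ε : ℂ) * Complex.I).im ≠ 0 := by
    intro lam; simp [hε.ne']
  have himm : ∀ lam : ℝ, ((lam : ℂ) - (ε : ℂ) * Complex.I).im ≠ 0 := by
    intro lam; simp [hε.ne']
  -- part 1
  have part1 : ∀ lam : ℝ,
      IsUnit (T - ((lam : ℂ) + (ε : ℂ) * Complex.I) • (1 : H →L[ℂ] H)) ∧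
      IsUnit (T - ((lam : ℂ) - (ε : ℂ) * Complex.I) • (1 : H →L[ℂ] H)) :=
    fun lam => ⟨(inv_cfc T hT _ (himp lam)).1, (inv_cfc T hT _ (himm lam)).1⟩
  -- the function F
  set F : ℝ → ℂ → ℂ := fun lam t =>
    ((t.re:ℂ) - ((lam:ℂ) + (ε:ℂ)*Complex.I))⁻¹ - ((t.re:ℂ) - ((lam:ℂ) - (ε:ℂ)*Complex.I))⁻¹
    with hF
  have hF_eq : ∀ (lam : ℝ) (t : ℂ),
      F lam t = ((2*ε/((t.re-lam)^2+ε^2) : ℝ) : ℂ) * Complex.I := by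
    intro lam t
    have e1 : (t.re:ℂ) - ((lam:ℂ) + (ε:ℂ)*Complex.I)
        = ((t.re - lam : ℝ):ℂ) - (ε:ℂ)*Complex.I := by push_cast; ring
    have e2 : (t.re:ℂ) - ((lam:ℂ) - (ε:ℂ)*Complex.I)
        = ((t.re - lam : ℝ):ℂ) + (ε:ℂ)*Complex.I := by push_cast; ring
    rw [hF]
    simp only [e1, e2]
    exact aux1 (t.re - lam) ε hε.ne'
  have n1 : ∀ (lam : ℝ) (t : ℂ), ((t.re:ℂ) - ((lam:ℂ) + (ε:ℂ)*Complex.I)) ≠ 0 := by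
    intro lam t h
    have := congrArg Complex.im h
    simp [hε.ne'] at this
  have n2 : ∀ (lam : ℝ) (t : ℂ), ((t.re:ℂ) - ((lam:ℂ) - (ε:ℂ)*Complex.I)) ≠ 0 := by
    intro lam t h
    have := congrArg Complex.im h
    simp [hε.ne'] at this
  have c1 : ∀ lam : ℝ, Continuous (fun t : ℂ => ((t.re:ℂ) - ((lam:ℂ) + (ε:ℂ)*Complex.I))⁻¹) :=
    fun lam => (((Complex.continuous_ofReal.comp Complex.continuous_re).sub
      continuous_const).inv₀ (n1 lam))
  have c2 : ∀ lam : ℝ, Continuous (fun t : ℂ => ((t.re:ℂ) - ((lam:ℂ) - (ε:ℂ)*Complex.I))⁻¹) :=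
    fun lam => (((Complex.continuous_ofReal.comp Complex.continuous_re).sub
      continuous_const).inv₀ (n2 lam))
  have hFcont : ∀ lam : ℝ, Continuous (F lam) := by
    intro lam
    rw [hF]
    exact (c1 lam).sub (c2 lam)
  -- rewrite the integrand
  have hfeq : ∀ lam : ℝ,
      (inner ℂ φ ((Ring.inverse (T - ((lam : ℂ) + (ε : ℂ) * Complex.I) • (1 : H →L[ℂ] H))
        - Ring.inverse (T - ((lam : ℂ) - (ε : ℂ) * Complex.I) • (1 : H →L[ℂ] H))) φ) : ℂ)
      = inner ℂ φ ((cfc (F lam) T) φ) := by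
    intro lam
    have hsub : cfc (fun t : ℂ => ((t.re:ℂ) - ((lam:ℂ) + (ε:ℂ)*Complex.I))⁻¹) T
        - cfc (fun t : ℂ => ((t.re:ℂ) - ((lam:ℂ) - (ε:ℂ)*Complex.I))⁻¹) T
        = cfc (F lam) T := by
      rw [hF]
      exact (cfc_sub _ _ T (c1 lam).continuousOn (c2 lam).continuousOn).symm
    rw [(inv_cfc T hT _ (himp lam)).2, (inv_cfc T hT _ (himm lam)).2, hsub]
  -- the continuous-map-valued function
  have hGbig : Continuous (fun p : ℝ × spectrum ℂ T => F p.1 (p.2 : ℂ)) := by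
    rw [hF]
    have a1 : Continuous (fun p : ℝ × spectrum ℂ T => (((p.2 : ℂ).re : ℝ) : ℂ)) :=
      Complex.continuous_ofReal.comp (Complex.continuous_re.comp
        (continuous_subtype_val.comp continuous_snd))
    have b1 : Continuous (fun p : ℝ × spectrum ℂ T => ((p.1 : ℂ) + (ε:ℂ)*Complex.I)) :=
      (Complex.continuous_ofReal.comp continuous_fst).add continuous_const
    have b2 : Continuous (fun p : ℝ × spectrum ℂ T => ((p.1 : ℂ) - (ε:ℂ)*Complex.I)) :=
      (Complex.continuous_ofReal.comp continuous_fst).sub continuous_const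
    exact ((a1.sub b1).inv₀ (fun p => n1 p.1 p.2)).sub ((a1.sub b2).inv₀ (fun p => n2 p.1 p.2))
  set GcM : C(ℝ, C(spectrum ℂ T, ℂ)) :=
    ContinuousMap.curry ⟨fun p : ℝ × spectrum ℂ T => F p.1 (p.2 : ℂ), hGbig⟩ with hGcM
  have hcurry_eq : ∀ lam : ℝ, cfc (F lam) T = cfcL (R := ℂ) hstar (GcM lam) := by
    intro lam
    rw [cfc_apply (F lam) T hstar (hFcont lam).continuousOn, cfcL_apply]
    exact congrArg _ (ContinuousMap.ext fun t => rfl)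
  set L : C(spectrum ℂ T, ℂ) →L[ℂ] ℂ :=
    (innerSL ℂ φ).comp (((ContinuousLinearMap.apply ℂ H) φ).comp (cfcL (R := ℂ) hstar))
    with hLdef
  have hL : ∀ g : C(spectrum ℂ T, ℂ), L g = inner ℂ φ ((cfcL (R := ℂ) hstar g) φ) :=
    fun g => rfl
  have hLf : ∀ lam : ℝ, (inner ℂ φ ((cfc (F lam) T) φ) : ℂ) = L (GcM lam) := by
    intro lam
    rw [hcurry_eq lam, hL]
  have hGint : ∀ a b : ℝ, IntervalIntegrable (fun lam => GcM lam) volume a b :=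
    fun a b => (map_continuous GcM).intervalIntegrable a b
  have hswap : ∀ R : ℝ, (∫ lam in (-R)..R, (inner ℂ φ ((cfc (F lam) T) φ) : ℂ))
      = L (∫ lam in (-R)..R, GcM lam) := by
    intro R
    simp_rw [hLf]
    exact L.intervalIntegral_comp_comm (hGint _ _)
  -- the explicit value of the inner integral
  set GR : ℝ → ℂ → ℂ := fun R t =>
    ((2*(Real.arctan ((R - t.re)/ε) - Real.arctan ((-R - t.re)/ε)) : ℝ) : ℂ) * Complex.I
    with hGR
  have hGRcont : ∀ R : ℝ, Continuous (GR R) := by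
    intro R
    rw [hGR]
    refine (Complex.continuous_ofReal.comp ?_).mul continuous_const
    refine continuous_const.mul (Continuous.sub ?_ ?_)
    · exact Real.continuous_arctan.comp ((continuous_const.sub Complex.continuous_re).div_const ε)
    · exact Real.continuous_arctan.comp ((continuous_const.sub Complex.continuous_re).div_const ε)
  have hXR : ∀ R : ℝ, cfcL (R := ℂ) hstar (∫ lam in (-R)..R, GcM lam) = cfc (GR R) T := by
    intro R
    rw [cfc_apply (GR R) T hstar (hGRcont R).continuousOn, cfcL_apply]
    refine congrArg _ (ContinuousMap.ext fun t => ?_)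
    have hev : (∫ lam in (-R)..R, GcM lam) t = ∫ lam in (-R)..R, F lam (t : ℂ) := by
      have := ((ContinuousMap.evalCLM ℂ t).intervalIntegral_comp_comm (hGint (-R) R)).symm
      exact this
    rw [hev]
    have : (∫ lam in (-R)..R, F lam (t : ℂ))
        = ∫ lam in (-R)..R, ((2*ε/(((t:ℂ).re-lam)^2+ε^2) : ℝ) : ℂ) * Complex.I := by
      refine intervalIntegral.integral_congr fun lam _ => hF_eq lam (t : ℂ)
    rw [this, intervalIntegral.integral_mul_const, intervalIntegral.integral_ofReal,
      aux2 (t:ℂ).re ε hε (-R) R]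
    rfl
  have hstone : ∀ R : ℝ, (∫ lam in (-R)..R, (inner ℂ φ ((cfc (F lam) T) φ) : ℂ))
      = inner ℂ φ ((cfc (GR R) T) φ) := by
    intro R
    rw [hswap, hL, hXR]
  -- spectrum is contained in [-M, M] (real part)
  have hspecre : ∀ x ∈ spectrum ℂ T, |x.re| ≤ M := by
    intro x hx
    have h1 : |x.re| ≤ ‖x‖ := Complex.abs_re_le_norm x
    have h2 : ‖x‖ ≤ ‖T‖ := spectrum.norm_le_norm_of_mem hx
    exact h1.trans h2
  -- bound on GR minus the constant
  have hbound : ∀ R : ℝ, ∀ x ∈ spectrum ℂ T,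
      ‖GR R x - 2*(Real.pi:ℂ)*Complex.I‖ ≤ 4*(Real.pi/2 - Real.arctan ((R-M)/ε)) := by
    intro R x hx
    obtain ⟨hc1, hc2⟩ := abs_le.mp (hspecre x hx)
    set c := x.re with hc
    set A := Real.arctan ((R - c)/ε) with hA
    set B := Real.arctan ((-R - c)/ε) with hB
    set G := Real.arctan ((R - M)/ε) with hG
    have hGA : G ≤ A := by
      apply Real.arctan_strictMono.monotone
      gcongr
    have hGB : G ≤ -B := by
      have : B = - Real.arctan ((R + c)/ε) := by
        rw [hB, show (-R - c)/ε = -((R + c)/ε) by ring, Real.arctan_neg]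
      rw [this, neg_neg]
      apply Real.arctan_strictMono.monotone
      gcongr
      linarith
    have hA2 : A < Real.pi/2 := Real.arctan_lt_pi_div_two _
    have hB2 : -B < Real.pi/2 := by
      have : B = - Real.arctan ((R + c)/ε) := by
        rw [hB, show (-R - c)/ε = -((R + c)/ε) by ring, Real.arctan_neg]
      rw [this, neg_neg]
      exact Real.arctan_lt_pi_div_two _
    have hform : GR R x - 2*(Real.pi:ℂ)*Complex.I
        = ((2*(A - B) - 2*Real.pi : ℝ) : ℂ) * Complex.I := by
      have e : GR R x = ((2*(A - B) : ℝ) : ℂ) * Complex.I := rfl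
      rw [e]
      push_cast
      ring
    rw [hform, norm_mul, Complex.norm_I, mul_one, Complex.norm_real, Real.norm_eq_abs]
    rw [abs_le]
    constructor <;> linarith
  -- norm bound for the truncated integrals
  have h2pi : (2 * (Real.pi : ℂ) * Complex.I * (‖φ‖ : ℂ) ^ 2 : ℂ)
      = inner ℂ φ ((((2*(Real.pi:ℂ)*Complex.I) • (1 : H →L[ℂ] H))) φ) := by
    rw [ContinuousLinearMap.smul_apply, ContinuousLinearMap.one_apply, inner_smul_right,
      inner_self_eq_norm_sq_to_K]
    norm_num
  have hnormbd : ∀ R : ℝ,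
      ‖(∫ lam in (-R)..R, (inner ℂ φ ((cfc (F lam) T) φ) : ℂ))
        - 2 * (Real.pi : ℂ) * Complex.I * (‖φ‖ : ℂ) ^ 2‖
      ≤ ‖φ‖^2 * (4*(Real.pi/2 - Real.arctan ((R-M)/ε))) := by
    intro R
    have hGpos : 0 ≤ 4*(Real.pi/2 - Real.arctan ((R-M)/ε)) := by
      have := Real.arctan_lt_pi_div_two ((R-M)/ε)
      linarith
    have hsub2 : cfc (GR R) T - (2*(Real.pi:ℂ)*Complex.I) • (1 : H →L[ℂ] H)
        = cfc (fun t : ℂ => GR R t - 2*(Real.pi:ℂ)*Complex.I) T := by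
      rw [cfc_sub _ _ T (hGRcont R).continuousOn continuousOn_const, cfc_const _ T,
        Algebra.algebraMap_eq_smul_one]
    have hnc : ‖cfc (fun t : ℂ => GR R t - 2*(Real.pi:ℂ)*Complex.I) T‖
        ≤ 4*(Real.pi/2 - Real.arctan ((R-M)/ε)) :=
      norm_cfc_le hGpos (fun x hx => hbound R x hx)
    rw [hstone R, h2pi, ← inner_sub_right, ← ContinuousLinearMap.sub_apply]
    calc ‖(inner ℂ φ (((cfc (GR R) T - (2*(Real.pi:ℂ)*Complex.I) • (1 : H →L[ℂ] H))) φ) : ℂ)‖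
        ≤ ‖φ‖ * ‖((cfc (GR R) T - (2*(Real.pi:ℂ)*Complex.I) • (1 : H →L[ℂ] H))) φ‖ :=
          norm_inner_le_norm _ _
      _ ≤ ‖φ‖ * (‖cfc (GR R) T - (2*(Real.pi:ℂ)*Complex.I) • (1 : H →L[ℂ] H)‖ * ‖φ‖) := by
          gcongr
          exact ContinuousLinearMap.le_opNorm _ _
      _ ≤ ‖φ‖ * ((4*(Real.pi/2 - Real.arctan ((R-M)/ε))) * ‖φ‖) := by
          gcongr
          rw [hsub2]
          exact hnc
      _ = ‖φ‖^2 * (4*(Real.pi/2 - Real.arctan ((R-M)/ε))) := by ring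
  -- the bound tends to zero
  have htend0 : Filter.Tendsto (fun R : ℝ => ‖φ‖^2 * (4*(Real.pi/2 - Real.arctan ((R-M)/ε))))
      Filter.atTop (nhds 0) := by
    have h1 : Filter.Tendsto (fun R : ℝ => (R - M)/ε) Filter.atTop Filter.atTop := by
      apply Filter.Tendsto.atTop_div_const hε
      simpa [sub_eq_add_neg] using Filter.tendsto_atTop_add_const_right Filter.atTop (-M)
        Filter.tendsto_id
    have h2 : Filter.Tendsto (fun R : ℝ => Real.arctan ((R-M)/ε)) Filter.atTop
        (nhds (Real.pi/2)) :=
      (tendsto_nhds_of_tendsto_nhdsWithin Real.tendsto_arctan_atTop).comp h1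
    have h3 : Filter.Tendsto (fun R : ℝ => ‖φ‖^2 * (4*(Real.pi/2 - Real.arctan ((R-M)/ε))))
        Filter.atTop (nhds (‖φ‖^2 * (4*(Real.pi/2 - Real.pi/2)))) :=
      ((tendsto_const_nhds.sub h2).const_mul (4:ℝ)).const_mul (‖φ‖^2)
    simpa using h3
  -- the truncated integrals converge to 2πi‖φ‖²
  have hlim : Filter.Tendsto (fun R : ℝ => ∫ lam in (-R)..R, (inner ℂ φ ((cfc (F lam) T) φ) : ℂ))
      Filter.atTop (nhds (2 * (Real.pi : ℂ) * Complex.I * (‖φ‖ : ℂ) ^ 2)) := by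
    rw [tendsto_iff_norm_sub_tendsto_zero]
    exact squeeze_zero (fun R => norm_nonneg _) hnormbd htend0
  -- pointwise bound for integrability
  have hfbound : ∀ lam : ℝ, ‖(inner ℂ φ ((cfc (F lam) T) φ) : ℂ)‖
      ≤ ‖φ‖^2 * (2*ε/((max (|lam| - M) 0)^2 + ε^2)) := by
    intro lam
    set m := max (|lam| - M) 0 with hm
    have hm0 : 0 ≤ m := le_max_right _ _
    have hnormF : ∀ x ∈ spectrum ℂ T, ‖F lam x‖ ≤ 2*ε/(m^2 + ε^2) := by
      intro x hx
      rw [hF_eq lam x]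
      rw [norm_mul]
      rw [Complex.norm_I]
      rw [mul_one]
      rw [Complex.norm_real]
      rw [Real.norm_eq_abs]
      rw [_root_.abs_of_nonneg (show (0:ℝ) ≤ 2*ε/((x.re - lam)^2+ε^2) by positivity)]
      have hd : m ≤ |x.re - lam| := by
        apply max_le _ (abs_nonneg _)
        have h1 : |x.re| ≤ M := hspecre x hx
        have h2 : |lam| - |x.re| ≤ |lam - x.re| := abs_sub_abs_le_abs_sub _ _
        rw [abs_sub_comm] at h2
        linarith
      have hsq : m^2 ≤ (x.re - lam)^2 := by
        nlinarith [_root_.sq_abs (x.re - lam)]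
      gcongr
    have hcfcn : ‖cfc (F lam) T‖ ≤ 2*ε/(m^2+ε^2) := norm_cfc_le (by positivity) hnormF
    calc ‖(inner ℂ φ ((cfc (F lam) T) φ) : ℂ)‖
        ≤ ‖φ‖ * ‖(cfc (F lam) T) φ‖ := norm_inner_le_norm _ _
      _ ≤ ‖φ‖ * (‖cfc (F lam) T‖ * ‖φ‖) := by
          gcongr
          exact ContinuousLinearMap.le_opNorm _ _
      _ ≤ ‖φ‖ * ((2*ε/(m^2+ε^2)) * ‖φ‖) := by gcongr
      _ = ‖φ‖^2 * (2*ε/(m^2+ε^2)) := by ring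
  -- continuity of the integrand
  have hcontf : Continuous (fun lam : ℝ => (inner ℂ φ ((cfc (F lam) T) φ) : ℂ)) := by
    have he : (fun lam : ℝ => (inner ℂ φ ((cfc (F lam) T) φ) : ℂ)) = fun lam => L (GcM lam) :=
      funext hLf
    rw [he]
    exact L.continuous.comp (map_continuous GcM)
  -- integrable majorant
  have hmaj : Integrable (fun lam : ℝ => ‖φ‖^2 * (2*ε/((max (|lam| - M) 0)^2 + ε^2))) := by
    set K := (1+(M+1)^2)*(1+ε^2)/ε^2 with hK
    have hK0 : 0 < K := by positivity
    have hKe : K*ε^2 = (1+(M+1)^2)*(1+ε^2) := by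
      rw [hK]
      field_simp
    have hKP : (1+(M+1)^2) ≤ K := by
      rw [hK, le_div_iff₀ (by positivity)]
      nlinarith [sq_nonneg ε, sq_nonneg (M+1)]
    refine (integrable_inv_one_add_sq.const_mul (‖φ‖^2 * (2*ε*K))).mono'
      ?_ (Filter.Eventually.of_forall ?_)
    · apply Continuous.aestronglyMeasurable
      apply continuous_const.mul
      apply Continuous.div continuous_const
      · fun_prop
      · intro lam
        positivity
    · intro lam
      have hmlam : 0 ≤ max (|lam| - M) 0 := le_max_right _ _
      rw [Real.norm_eq_abs, _root_.abs_of_nonneg (show (0:ℝ) ≤ ‖φ‖^2 * (2*ε/((max (|lam| - M) 0)^2 + ε^2)) by positivity)]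
      have key : 1 + lam^2 ≤ K*((max (|lam| - M) 0)^2 + ε^2) := by
        have hsa : lam^2 = |lam|^2 := (_root_.sq_abs lam).symm
        rcases le_or_gt (|lam|) (M+1) with hcase | hcase
        · have h1 : K*ε^2 ≤ K*((max (|lam| - M) 0)^2 + ε^2) := by
            nlinarith [sq_nonneg (max (|lam| - M) 0)]
          nlinarith [abs_nonneg lam, sq_nonneg ε, sq_nonneg (M+1)]
        · have hmax : max (|lam| - M) 0 = |lam| - M := max_eq_left (by linarith)
          rw [hmax]
          set a := |lam| with ha
          have h1m : (1:ℝ) ≤ a - M := by linarith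
          have hstep : 1 + a^2 ≤ (a - M)^2*(1+(M+1)^2) := by
            nlinarith [mul_le_mul_of_nonneg_left h1m hM0, sq_nonneg (a - M - 1),
              mul_nonneg hM0 hM0, sq_nonneg (a - M), mul_nonneg (mul_nonneg hM0 hM0)
                (by linarith : (0:ℝ) ≤ a - M - 1)]
          have hstep2 : (a - M)^2*(1+(M+1)^2) ≤ (a - M)^2*K := by
            nlinarith [sq_nonneg (a - M)]
          nlinarith [mul_nonneg hK0.le (sq_nonneg ε)]
      have h4 : 2*ε/((max (|lam| - M) 0)^2 + ε^2) ≤ 2*ε*K/(1+lam^2) := by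
        rw [div_le_div_iff₀ (by positivity) (by positivity)]
        nlinarith [mul_le_mul_of_nonneg_left key (by positivity : (0:ℝ) ≤ 2*ε)]
      calc ‖φ‖^2 * (2*ε/((max (|lam| - M) 0)^2 + ε^2))
          ≤ ‖φ‖^2 * (2*ε*K/(1+lam^2)) := by gcongr
        _ = ‖φ‖^2*(2*ε*K) * (1+lam^2)⁻¹ := by
            rw [div_eq_mul_inv]
            ring
  -- integrability
  have hIntf : Integrable (fun lam : ℝ => (inner ℂ φ ((cfc (F lam) T) φ) : ℂ)) :=
    hmaj.mono' hcontf.aestronglyMeasurable (Filter.Eventually.of_forall hfbound)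
  refine ⟨part1, ?_, ?_⟩
  · exact hIntf.congr (Filter.Eventually.of_forall (fun lam => (hfeq lam).symm))
  · have htint := MeasureTheory.intervalIntegral_tendsto_integral hIntf
      tendsto_neg_atTop_atBot Filter.tendsto_id
    have hfin := tendsto_nhds_unique htint hlim
    rw [← hfin]
    exact integral_congr_ae (Filter.Eventually.of_forall hfeq)
end
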